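/- arXiv:1403.7768 — 7 statements merged into one kernel-verified Lean document; each statement's English description precedes it below -/
import Mathlib

section
/- (Sierpiński) Let $\mu$ be a non-atomic finite measure on a measurable space $(X,\Sigma)$ with $\mu(X) = c$. Then there exists a map $S : [0,c] \to \Sigma$ which is monotone with respect to inclusion (i.e. $s \leq t$ implies $S(s) \subseteq S(t)$) and satisfies $\mu(S(t)) = t$ for every $t \in [0,c]$. -/
open MeasureTheory
open scoped ENNReal

section Aux

variable {X : Type*} [MeasurableSpace X] (μ : Measure X) [IsFiniteMeasure μ]

/-- invariant for the dyadic family at level `n`. -/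
def DyadicInv (n : ℕ) (f : ℕ → Set X) : Prop :=
  (∀ k, MeasurableSet (f k)) ∧ Monotone f ∧
    (∀ k, k ≤ 2 ^ n → μ (f k) = k * μ Set.univ / 2 ^ n) ∧
    (∀ k, 2 ^ n ≤ k → f k = Set.univ)

lemma dyadic_double (c : ℝ≥0∞) (n m : ℕ) :
    ((2 * m : ℕ) : ℝ≥0∞) * c / 2 ^ (n + 1) = (m : ℝ≥0∞) * c / 2 ^ n := by
  push_cast
  rw [mul_assoc, pow_succ, mul_comm ((2:ℝ≥0∞) ^ n) 2]
  exact ENNReal.mul_div_mul_left _ _ two_ne_zero ENNReal.ofNat_ne_top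

lemma dyadic_succ (c : ℝ≥0∞) (n m : ℕ) :
    ((m + 1 : ℕ) : ℝ≥0∞) * c / 2 ^ n = (m : ℝ≥0∞) * c / 2 ^ n + c / 2 ^ n := by
  push_cast
  rw [add_mul, one_mul, ENNReal.add_div]

lemma dyadic_odd (c : ℝ≥0∞) (n m : ℕ) :
    ((2 * m + 1 : ℕ) : ℝ≥0∞) * c / 2 ^ (n + 1)
      = (m : ℝ≥0∞) * c / 2 ^ n + c / 2 ^ (n + 1) := by
  rw [dyadic_succ, dyadic_double]

lemma dyadic_top (c : ℝ≥0∞) (n : ℕ) :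
    ((2 ^ n : ℕ) : ℝ≥0∞) * c / 2 ^ n = c := by
  push_cast
  rw [mul_comm, mul_div_assoc, ENNReal.div_self (by positivity) (ENNReal.pow_ne_top ENNReal.ofNat_ne_top), mul_one]

lemma dyadic_half (c : ℝ≥0∞) (n : ℕ) :
    c / 2 ^ n / 2 = c / 2 ^ (n + 1) := by
  rw [pow_succ, div_eq_mul_inv, div_eq_mul_inv, div_eq_mul_inv, mul_assoc,
    ENNReal.mul_inv (by simp) (by simp)]

end Aux

/-- **Sierpiński.** If `μ` is a non-atomic finite measure on a measurable space `X` with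
total mass `c = μ X`, then there is a map `S` from `[0, c]` to measurable sets which is
monotone with respect to inclusion and satisfies `μ (S t) = t` for every `t ∈ [0, c]`. -/
theorem stmt3 {X : Type*} [MeasurableSpace X] (μ : Measure X) [IsFiniteMeasure μ]
    (hna : ∀ A : Set X, MeasurableSet A → 0 < μ A →
      ∀ t : ℝ≥0∞, 0 < t → t < μ A → ∃ B ⊆ A, MeasurableSet B ∧ μ B = t) :
    ∃ S : ℝ≥0∞ → Set X,
      (∀ t, t ≤ μ Set.univ → MeasurableSet (S t)) ∧
      (∀ s t, s ≤ t → t ≤ μ Set.univ → S s ⊆ S t) ∧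
      (∀ t, t ≤ μ Set.univ → μ (S t) = t) := by
  classical
  set c := μ Set.univ with hc
  have hcfin : c ≠ ∞ := measure_ne_top μ _
  -- halving lemma
  have halve : ∀ A : Set X, MeasurableSet A → ∃ B, B ⊆ A ∧ MeasurableSet B ∧ μ B = μ A / 2 := by
    intro A hA
    rcases eq_or_lt_of_le (zero_le : (0 : ℝ≥0∞) ≤ μ A) with h0 | h0
    · exact ⟨∅, Set.empty_subset A, MeasurableSet.empty, by simp [← h0]⟩
    · have hfin : μ A ≠ ∞ := measure_ne_top μ A
      obtain ⟨B, hBA, hBm, hBμ⟩ := hna A hA h0 (μ A / 2) (ENNReal.half_pos (ne_of_gt h0))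
        (ENNReal.half_lt_self (ne_of_gt h0) hfin)
      exact ⟨B, hBA, hBm, hBμ⟩
  -- step of the construction
  have stepEx : ∀ (n : ℕ) (f : ℕ → Set X), DyadicInv μ n f →
      ∃ f', DyadicInv μ (n + 1) f' ∧ ∀ k, f' (2 * k) = f k := by
    intro n f ⟨hmeas, hmono, hμ, huniv⟩
    choose B hBsub hBmeas hBμ using fun m => halve (f (m + 1) \ f m) ((hmeas (m+1)).diff (hmeas m))
    have hdiff : ∀ m, m + 1 ≤ 2 ^ n → μ (f (m + 1) \ f m) = c / 2 ^ n := by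
      intro m hm
      rw [measure_diff (hmono (Nat.le_succ m)) (hmeas m).nullMeasurableSet (measure_ne_top μ _),
        hμ _ hm, hμ _ (le_trans (Nat.le_succ m) hm), dyadic_succ,
        ENNReal.add_sub_cancel_left]
      exact (ENNReal.div_lt_top (ENNReal.mul_ne_top (by simp) hcfin) (by positivity)).ne
    refine ⟨fun k => if 2 ^ (n + 1) ≤ k then Set.univ else
      if 2 ∣ k then f (k / 2) else f (k / 2) ∪ B (k / 2), ⟨?_, ?_, ?_, ?_⟩, ?_⟩
    · intro k
      dsimp only
      split_ifs
      · exact MeasurableSet.univ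
      · exact hmeas _
      · exact (hmeas _).union (hBmeas _)
    · apply monotone_nat_of_le_succ
      intro k
      by_cases h1 : 2 ^ (n + 1) ≤ k
      · rw [if_pos h1, if_pos (le_trans h1 (Nat.le_succ k))]
      · by_cases h2 : 2 ^ (n + 1) ≤ k + 1
        · simp only [if_neg h1, if_pos h2]
          exact Set.subset_univ _
        · rcases Nat.even_or_odd k with he | ho
          · have h2k : 2 ∣ k := by rcases he with ⟨m, hm⟩; omega
            have : ¬ 2 ∣ (k + 1) := by omega
            have hsame : (k + 1) / 2 = k / 2 := by omega
            simp only [if_neg h1, if_neg h2, if_pos h2k, if_neg this, hsame]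
            exact Set.subset_union_left
          · have h2k : ¬ 2 ∣ k := by
              rcases ho with ⟨m, hm⟩; omega
            have h2k1 : 2 ∣ (k + 1) := by
              rcases ho with ⟨m, hm⟩; omega
            have hsucc : (k + 1) / 2 = k / 2 + 1 := by omega
            simp only [if_neg h1, if_neg h2, if_neg h2k, if_pos h2k1, hsucc]
            refine Set.union_subset (hmono (Nat.le_succ _)) ?_
            exact (hBsub _).trans Set.diff_subset
    · intro k hk
      dsimp only
      rcases eq_or_lt_of_le hk with heq | hlt
      · rw [if_pos (le_of_eq heq.symm), heq, ← hc, dyadic_top]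
      · have h1 : ¬ 2 ^ (n + 1) ≤ k := not_le.mpr hlt
        rcases Nat.even_or_odd k with he | ho
        · obtain ⟨m, hm⟩ := he
          have h2k : 2 ∣ k := by omega
          have hm2 : k = 2 * m := by omega
          have hmle : m ≤ 2 ^ n := by
            rw [pow_succ] at hk; omega
          rw [if_neg h1, if_pos h2k, hm2, Nat.mul_div_cancel_left _ (by norm_num),
            hμ _ hmle, ← dyadic_double c n m, ← hm2]
        · obtain ⟨m, hm⟩ := ho
          have h2k : ¬ 2 ∣ k := by omega
          have hm1le : m + 1 ≤ 2 ^ n := by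
            rw [pow_succ] at hlt; omega
          have hdiv : k / 2 = m := by omega
          rw [if_neg h1, if_neg h2k, hdiv]
          have hdisj : Disjoint (f m) (B m) :=
            Set.disjoint_of_subset_right (hBsub m) disjoint_sdiff_self_right
          rw [measure_union hdisj (hBmeas m), hμ _ (le_trans (Nat.le_succ m) hm1le),
            hBμ, hdiff m hm1le, dyadic_half, hm, dyadic_odd]
    · intro k hk
      dsimp only
      rw [if_pos hk]
    · intro k
      dsimp only
      by_cases h1 : 2 ^ (n + 1) ≤ 2 * k
      · have : 2 ^ n ≤ k := by rw [pow_succ] at h1; omega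
        rw [if_pos h1, huniv _ this]
      · rw [if_neg h1, if_pos ⟨k, rfl⟩, Nat.mul_div_cancel_left _ (by norm_num)]
  -- base
  have baseEx : DyadicInv μ 0 (fun k => if k = 0 then (∅ : Set X) else Set.univ) := by
    refine ⟨fun k => ?_, ?_, ?_, ?_⟩
    · by_cases hk0 : k = 0 <;> simp [hk0]
    · intro a b hab
      by_cases ha : a = 0
      · simp [ha]
      · have hb : b ≠ 0 := by omega
        simp only [if_neg ha, if_neg hb]
        exact le_rfl
    · intro k hk
      interval_cases k
      · simp
      · show μ Set.univ = ((1 : ℕ) : ℝ≥0∞) * μ Set.univ / 2 ^ 0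
        simp
    · intro k hk
      have : k ≠ 0 := by omega
      simp [this]
  -- build the full family
  obtain ⟨g, hg, hglink⟩ : ∃ g : ℕ → ℕ → Set X,
      (∀ n, DyadicInv μ n (g n)) ∧ ∀ n k, g (n + 1) (2 * k) = g n k := by
    choose step hstep hlink using fun (n : ℕ) (fh : {f : ℕ → Set X // DyadicInv μ n f}) =>
      stepEx n fh.1 fh.2
    let F : ∀ n : ℕ, {f : ℕ → Set X // DyadicInv μ n f} := fun n =>
      Nat.rec ⟨_, baseEx⟩ (fun n fh => ⟨step n fh, hstep n fh⟩) n
    exact ⟨fun n => (F n).1, fun n => (F n).2, fun n k => hlink n (F n) k⟩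
  obtain ⟨hgmeas, hgmono, hgμ, -⟩ : (∀ n k, MeasurableSet (g n k)) ∧ (∀ n, Monotone (g n)) ∧
      (∀ n k, k ≤ 2 ^ n → μ (g n k) = k * c / 2 ^ n) ∧ True :=
    ⟨fun n => (hg n).1, fun n => (hg n).2.1, fun n => (hg n).2.2.1, trivial⟩
  -- the index function
  set K : ℕ → ℝ≥0∞ → ℕ := fun n t => Nat.findGreatest (fun k => (k : ℝ≥0∞) * c / 2 ^ n ≤ t) (2 ^ n)
    with hK
  have hKle : ∀ n t, K n t ≤ 2 ^ n := fun n t => Nat.findGreatest_le _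
  have hKspec : ∀ n t, (K n t : ℝ≥0∞) * c / 2 ^ n ≤ t := by
    intro n t
    exact Nat.findGreatest_spec (P := fun k => (k : ℝ≥0∞) * c / 2 ^ n ≤ t)
      (Nat.zero_le _) (by simp)
  have hKmono_t : ∀ n s t, s ≤ t → K n s ≤ K n t := by
    intro n s t hst
    exact Nat.findGreatest_mono (fun k hk => le_trans hk hst) le_rfl
  have hKdouble : ∀ n t, 2 * K n t ≤ K (n + 1) t := by
    intro n t
    apply Nat.le_findGreatest
    · rw [pow_succ]; have := hKle n t; omega
    · rw [dyadic_double]; exact hKspec n t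
  -- define S
  refine ⟨fun t => ⋃ n, g n (K n t), ?_, ?_, ?_⟩
  · intro t _
    exact MeasurableSet.iUnion fun n => hgmeas n _
  · intro s t hst _
    exact Set.iUnion_mono fun n => hgmono n (hKmono_t n s t hst)
  · intro t ht
    have hmono : Monotone (fun n => g n (K n t)) := by
      apply monotone_nat_of_le_succ
      intro n
      calc g n (K n t) = g (n + 1) (2 * K n t) := (hglink n _).symm
        _ ⊆ g (n + 1) (K (n + 1) t) := hgmono (n + 1) (hKdouble n t)
    rw [hmono.directed_le.measure_iUnion]
    have hvals : ∀ n, μ (g n (K n t)) = (K n t : ℝ≥0∞) * c / 2 ^ n := fun n =>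
      hgμ n _ (hKle n t)
    simp only [hvals]
    apply le_antisymm
    · exact iSup_le fun n => hKspec n t
    · apply ENNReal.le_of_forall_pos_le_add
      intro ε hε hfin
      -- choose n with c / 2 ^ n ≤ ε
      obtain ⟨n, hn⟩ : ∃ n : ℕ, c / 2 ^ n ≤ (ε : ℝ≥0∞) := by
        have hεne : (ε : ℝ≥0∞) ≠ 0 := ENNReal.coe_ne_zero.mpr hε.ne'
        obtain ⟨m, hm⟩ := ENNReal.exists_nat_gt
          ((ENNReal.div_lt_top hcfin hεne).ne : c / (ε : ℝ≥0∞) ≠ ∞)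
        refine ⟨m, ?_⟩
        rw [ENNReal.div_le_iff (by positivity) (ENNReal.pow_ne_top ENNReal.ofNat_ne_top)]
        have h1 : c < (m : ℝ≥0∞) * (ε : ℝ≥0∞) :=
          (ENNReal.div_lt_iff (Or.inl hεne) (Or.inl ENNReal.coe_ne_top)).mp hm
        calc c ≤ (ε : ℝ≥0∞) * (m : ℝ≥0∞) := by rw [mul_comm]; exact h1.le
          _ ≤ (ε : ℝ≥0∞) * 2 ^ m := by
                gcongr
                exact_mod_cast (Nat.lt_two_pow_self (n := m)).le

      have hle : t ≤ (K n t : ℝ≥0∞) * c / 2 ^ n + c / 2 ^ n := by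
        rcases eq_or_lt_of_le (hKle n t) with heq | hlt
        · refine le_trans ?_ le_self_add
          rw [show ((K n t : ℕ) : ℝ≥0∞) = ((2 ^ n : ℕ) : ℝ≥0∞) by rw [heq], dyadic_top]
          exact ht
        · have hgr := Nat.findGreatest_is_greatest (P := fun k => (k : ℝ≥0∞) * c / 2 ^ n ≤ t)
            (n := 2 ^ n) (k := K n t + 1) (Nat.lt_succ_self _) hlt
          have hlt' : t < ((K n t + 1 : ℕ) : ℝ≥0∞) * c / 2 ^ n := not_le.mp hgr
          calc t ≤ ((K n t + 1 : ℕ) : ℝ≥0∞) * c / 2 ^ n := hlt'.le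
            _ = (K n t : ℝ≥0∞) * c / 2 ^ n + c / 2 ^ n := dyadic_succ c n _
      calc t ≤ (K n t : ℝ≥0∞) * c / 2 ^ n + c / 2 ^ n := hle
        _ ≤ (⨆ m, (K m t : ℝ≥0∞) * c / 2 ^ m) + ε := add_le_add (le_iSup (fun m => (K m t : ℝ≥0∞) * c / 2 ^ m) n) hn
end

section
/- Let $\mu$ be a non-atomic Radon measure with $\mu \neq 0$ and let $1 \leq p < \infty$. Then $L^p(\mu)$ is not finitely generated as a module over $L^\infty(\mu)$: for any $f_1, \dots, f_N \in L^p(\mu)$ there exists $g \in L^p(\mu)$ which cannot be written as $g = \sum_{i=1}^N \lambda_i f_i$ with $\lambda_1,\dots,\lambda_N \in L^\infty(\mu)$. -/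
open MeasureTheory Set
open scoped ENNReal

/-- A regular non-atomic measure splits any measurable set of positive finite measure. -/
lemma split_aux {X : Type*} [TopologicalSpace X] [MeasurableSpace X] [BorelSpace X]
    (μ : Measure X) [μ.Regular] [NullSingletonClass μ] {s : Set X} (hs : MeasurableSet s)
    (h0 : 0 < μ s) (h1 : μ s ≠ ∞) :
    ∃ t, MeasurableSet t ∧ t ⊆ s ∧ 0 < μ t ∧ μ t < μ s := by
  by_contra hcon
  push_neg at hcon
  have dich : ∀ t, MeasurableSet t → t ⊆ s → μ t = 0 ∨ μ t = μ s := by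
    intro t ht hts
    rcases eq_or_lt_of_le (zero_le (a := μ t)) with h | h
    · exact Or.inl h.symm
    · exact Or.inr (le_antisymm (measure_mono hts) (hcon t ht hts h))
  set V : Set X := ⋃₀ {U | IsOpen U ∧ μ (U ∩ s) = 0} with hV
  have hVopen : IsOpen V := isOpen_sUnion fun U hU => hU.1
  have hVnull : μ (V ∩ s) = 0 := by
    by_contra hVn
    have hVm : MeasurableSet (V ∩ s) := hVopen.measurableSet.inter hs
    have hVfin : μ (V ∩ s) ≠ ∞ := ne_top_of_le_ne_top h1 (measure_mono inter_subset_right)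
    obtain ⟨K, hKsub, hKc, hK⟩ := hVm.exists_lt_isCompact_of_ne_top hVfin
      (pos_iff_ne_zero.mpr hVn)
    have hKV : K ⊆ ⋃ U : {U : Set X // IsOpen U ∧ μ (U ∩ s) = 0}, (U : Set X) := by
      intro x hx
      obtain ⟨U, hU, hxU⟩ := hKsub hx |>.1
      exact mem_iUnion.mpr ⟨⟨U, hU⟩, hxU⟩
    obtain ⟨F, hF⟩ := hKc.elim_finite_subcover _ (fun U => U.2.1) hKV
    have : μ K ≤ ∑ U ∈ F, μ ((U : Set X) ∩ s) := by
      calc μ K ≤ μ (⋃ U ∈ F, (U : Set X) ∩ s) := by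
            refine measure_mono fun x hx => ?_
            obtain ⟨U, hUF, hxU⟩ := mem_iUnion₂.mp (hF hx)
            exact mem_iUnion₂.mpr ⟨U, hUF, hxU, (hKsub hx).2⟩
        _ ≤ ∑ U ∈ F, μ ((U : Set X) ∩ s) := measure_biUnion_finset_le F _
    simp only [fun U : {U : Set X // IsOpen U ∧ μ (U ∩ s) = 0} => U.2.2,
      Finset.sum_const_zero, nonpos_iff_eq_zero] at this
    exact hK.ne' this
  have hsV : μ (s \ V) ≠ 0 := by
    intro h0'
    have : μ s ≤ μ (s \ V) + μ (V ∩ s) :=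
      (measure_mono fun x hx => by
        by_cases hxV : x ∈ V
        · exact Or.inr ⟨hxV, hx⟩
        · exact Or.inl ⟨hx, hxV⟩).trans (measure_union_le _ _)
    rw [h0', hVnull] at this
    simp only [add_zero, nonpos_iff_eq_zero] at this
    exact h0.ne' this
  obtain ⟨x, hxs, hxV⟩ := nonempty_of_measure_ne_zero hsV
  have hx0 : μ {x} = 0 := measure_singleton x
  obtain ⟨U, hxU, hUopen, hU⟩ := Set.exists_isOpen_lt_of_lt {x} (μ s) (by rw [hx0]; exact h0)
  have hUs : μ (U ∩ s) < μ s := lt_of_le_of_lt (measure_mono inter_subset_left) hU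
  rcases dich (U ∩ s) (hUopen.measurableSet.inter hs) inter_subset_right with h | h
  · exact hxV (mem_sUnion.mpr ⟨U, ⟨hUopen, h⟩, hxU (mem_singleton x)⟩)
  · exact hUs.ne h

/-- One can find a subset of arbitrarily small positive measure. -/
lemma shrink_aux {X : Type*} [TopologicalSpace X] [MeasurableSpace X] [BorelSpace X]
    (μ : Measure X) [μ.Regular] [NullSingletonClass μ] {s : Set X} (hs : MeasurableSet s)
    (h0 : 0 < μ s) (h1 : μ s ≠ ∞) {ε : ℝ≥0∞} (hε : ε ≠ 0) :
    ∃ t, MeasurableSet t ∧ t ⊆ s ∧ 0 < μ t ∧ μ t ≤ ε := by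
  have key : ∀ n : ℕ, ∃ t, MeasurableSet t ∧ t ⊆ s ∧ 0 < μ t ∧ μ t ≤ μ s / 2 ^ n := by
    intro n
    induction n with
    | zero => exact ⟨s, hs, subset_rfl, h0, by simp⟩
    | succ n ih =>
      obtain ⟨t, ht, hts, ht0, htle⟩ := ih
      have htfin : μ t ≠ ∞ := ne_top_of_le_ne_top h1 (measure_mono hts)
      obtain ⟨u, hu, hut, hu0, hult⟩ := split_aux μ ht ht0 htfin
      have hufin : μ u ≠ ∞ := ne_top_of_le_ne_top htfin (measure_mono hut)
      have hdiff : μ (t \ u) = μ t - μ u := measure_diff hut hu.nullMeasurableSet hufin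
      have key2 : μ u ≤ μ t / 2 ∨ μ (t \ u) ≤ μ t / 2 := by
        by_contra hc
        push_neg at hc
        have : μ t < μ t := by
          calc μ t = μ t / 2 + μ t / 2 := (ENNReal.add_halves _).symm
            _ < μ u + μ (t \ u) := ENNReal.add_lt_add hc.1 hc.2
            _ = μ t := by
                rw [hdiff, add_comm, tsub_add_cancel_of_le hult.le]
        exact this.false
      have hdd : μ s / 2 ^ n / 2 = μ s / 2 ^ (n + 1) := by
        rw [pow_succ, div_eq_mul_inv, div_eq_mul_inv, div_eq_mul_inv, mul_assoc,
          ← ENNReal.mul_inv (by simp) (by simp)]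
      have hhalf : μ t / 2 ≤ μ s / 2 ^ (n + 1) := by
        rw [← hdd]
        exact ENNReal.div_le_div_right htle 2
      rcases key2 with h | h
      · exact ⟨u, hu, hut.trans hts, hu0, h.trans hhalf⟩
      · refine ⟨t \ u, ht.diff hu, (diff_subset).trans hts, ?_, h.trans hhalf⟩
        rw [hdiff]
        exact tsub_pos_of_lt hult
  rcases eq_or_ne ε ∞ with rfl | hεtop
  · exact ⟨s, hs, subset_rfl, h0, le_top⟩
  obtain ⟨n, hn⟩ := ENNReal.exists_nat_gt (ENNReal.div_lt_top h1 hε).ne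
  have h2n : μ s / ε < 2 ^ n := hn.trans_le (by exact_mod_cast (Nat.lt_two_pow_self (n := n)).le)
  obtain ⟨t, ht, hts, ht0, htle⟩ := key n
  refine ⟨t, ht, hts, ht0, htle.trans ?_⟩
  rw [ENNReal.div_le_iff_le_mul (Or.inl (by positivity)) (Or.inl (by simp))]
  rw [ENNReal.div_lt_iff (Or.inl hε) (Or.inl hεtop)] at h2n
  rw [mul_comm] at h2n
  exact h2n.le

/-- A sequence of pairwise disjoint positive-measure subsets with small measures. -/
lemma seq_aux {X : Type*} [TopologicalSpace X] [MeasurableSpace X] [BorelSpace X]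
    (μ : Measure X) [μ.Regular] [NullSingletonClass μ] {A : Set X} (hA : MeasurableSet A)
    (h0 : 0 < μ A) (h1 : μ A ≠ ∞) (ε : ℕ → ℝ≥0∞) (hε : ∀ n, ε n ≠ 0) :
    ∃ B : ℕ → Set X, (∀ n, MeasurableSet (B n)) ∧ (∀ n, B n ⊆ A) ∧
      (∀ n, 0 < μ (B n)) ∧ (∀ n, μ (B n) ≤ ε n) ∧
      (∀ m n, m ≠ n → Disjoint (B m) (B n)) := by
  set T := {s : Set X // MeasurableSet s ∧ 0 < μ s ∧ μ s ≠ ∞ ∧ s ⊆ A} with hT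
  have step : ∀ (n : ℕ) (s : T), ∃ p : Set X × T,
      MeasurableSet p.1 ∧ p.1 ⊆ s.1 ∧ 0 < μ p.1 ∧ μ p.1 ≤ ε n ∧ p.2.1 = s.1 \ p.1 := by
    intro n s
    obtain ⟨hsm, hs0, hsfin, hsA⟩ := s.2
    have hhalf : μ s.1 / 2 ≠ 0 := by
      simp [ENNReal.div_eq_zero_iff, hs0.ne']
    obtain ⟨t, ht, hts, ht0, htle⟩ := shrink_aux μ hsm hs0 hsfin
      (ε := min (ε n) (μ s.1 / 2)) (by simp [lt_min_iff, pos_iff_ne_zero.symm, pos_iff_ne_zero.mpr (hε n), pos_iff_ne_zero.mpr hhalf, ← pos_iff_ne_zero])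
    have htlt : μ t < μ s.1 := lt_of_le_of_lt (htle.trans (min_le_right _ _))
      (ENNReal.half_lt_self hs0.ne' hsfin)
    have htfin : μ t ≠ ∞ := ne_top_of_le_ne_top hsfin (measure_mono hts)
    have hdm : μ (s.1 \ t) = μ s.1 - μ t := measure_diff hts ht.nullMeasurableSet htfin
    refine ⟨⟨t, s.1 \ t, hsm.diff ht, ?_, ?_, diff_subset.trans hsA⟩,
      ht, hts, ht0, htle.trans (min_le_left _ _), rfl⟩
    · rw [hdm]; exact tsub_pos_of_lt htlt
    · rw [hdm]; exact ne_top_of_le_ne_top hsfin (tsub_le_self.trans le_rfl)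
  choose F hF1 hF2 hF3 hF4 hF5 using step
  set S : ℕ → T := fun n => Nat.rec ⟨A, hA, h0, h1, subset_rfl⟩ (fun n s => (F n s).2) n with hS
  set B : ℕ → Set X := fun n => (F n (S n)).1 with hB
  have hSsucc : ∀ n, (S (n + 1)).1 = (S n).1 \ B n := fun n => hF5 n (S n)
  have hBsub : ∀ n, B n ⊆ (S n).1 := fun n => hF2 n (S n)
  have hSmono : ∀ m n, m ≤ n → (S n).1 ⊆ (S m).1 := by
    intro m n hmn
    induction n with
    | zero => simp_all
    | succ n ih =>
      rcases Nat.lt_or_ge m (n + 1) with h | h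
      · exact (hSsucc n ▸ (diff_subset)).trans (ih (Nat.lt_succ_iff.mp h))
      · have : m = n + 1 := le_antisymm (by omega) h
        subst this; exact subset_rfl
  have hdisj : ∀ m n, m ≠ n → Disjoint (B m) (B n) := by
    have key : ∀ m n, m < n → Disjoint (B m) (B n) := by
      intro m n hmn
      have : B n ⊆ (S (m + 1)).1 := (hBsub n).trans (hSmono (m + 1) n hmn)
      rw [hSsucc m] at this
      exact Disjoint.mono_right this disjoint_sdiff_right
    intro m n hmn
    rcases Nat.lt_or_ge m n with h | h
    · exact key m n h
    · exact (key n m (by omega)).symm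
  exact ⟨B, fun n => hF1 n (S n), fun n => (hBsub n).trans (S n).2.2.2.2,
    fun n => hF3 n (S n), fun n => hF4 n (S n), hdisj⟩

lemma boundedSet_aux {X : Type*} [TopologicalSpace X] [MeasurableSpace X] [BorelSpace X]
    (μ : Measure X) [μ.Regular] (hμ : μ ≠ 0) {N : ℕ} (φ : Fin N → X → ℝ)
    (hφ : ∀ i, Measurable (φ i)) :
    ∃ (A : Set X) (M : ℝ), MeasurableSet A ∧ 0 < μ A ∧ μ A ≠ ∞ ∧
      ∀ x ∈ A, ∀ i, |φ i x| ≤ M := by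
  obtain ⟨K, hKc, hK0⟩ := (Measure.Regular.exists_isCompact_not_null (μ := μ)).mpr hμ
  set T := toMeasurable μ K with hTdef
  have hTm : MeasurableSet T := measurableSet_toMeasurable μ K
  have hTμ : μ T = μ K := measure_toMeasurable K
  have hT0 : 0 < μ T := by rw [hTμ]; exact pos_iff_ne_zero.mpr hK0
  have hTfin : μ T ≠ ∞ := by rw [hTμ]; exact hKc.measure_lt_top.ne
  set As : ℕ → Set X := fun M => T ∩ ⋂ i, {x | |φ i x| ≤ (M : ℝ)} with hAs
  have hAsm : ∀ M, MeasurableSet (As M) := fun M =>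
    hTm.inter (MeasurableSet.iInter fun i => measurableSet_le ((hφ i).abs) measurable_const)
  have hAsU : T ⊆ ⋃ M, As M := by
    intro x hx
    obtain ⟨M0, hM0⟩ := Finset.exists_le (Finset.univ.image fun i => |φ i x|)
    obtain ⟨M, hM⟩ := exists_nat_ge M0
    refine mem_iUnion.mpr ⟨M, hx, mem_iInter.mpr fun i => ?_⟩
    exact (hM0 _ (Finset.mem_image_of_mem _ (Finset.mem_univ i))).trans hM
  have hdir : Directed (· ⊆ ·) As := by
    intro m n
    refine ⟨max m n, inter_subset_inter_right _ ?_, inter_subset_inter_right _ ?_⟩ <;>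
    · refine iInter_mono fun i x hx => ?_
      simp only [mem_setOf_eq] at hx ⊢
      refine le_trans hx ?_
      exact_mod_cast by simp [Nat.le_max_left, Nat.le_max_right]
  have : 0 < ⨆ M, μ (As M) := by
    rw [← Directed.measure_iUnion hdir]
    exact lt_of_lt_of_le hT0 (measure_mono hAsU)
  obtain ⟨M, hM⟩ : ∃ M, 0 < μ (As M) := by
    by_contra hc
    push_neg at hc
    simp only [nonpos_iff_eq_zero] at hc
    simp [hc] at this
  refine ⟨As M, (M : ℝ), hAsm M, hM,
    ne_top_of_le_ne_top hTfin (measure_mono inter_subset_left), fun x hx i => ?_⟩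
  exact mem_iInter.mp hx.2 i

lemma g_aux {X : Type*} [MeasurableSpace X] (μ : Measure X) (p : ℝ≥0∞) (hp : 1 ≤ p)
    (hp' : p ≠ ∞) (B : ℕ → Set X) (hBm : ∀ n, MeasurableSet (B n))
    (hdisj : ∀ m n, m ≠ n → Disjoint (B m) (B n))
    (hBle : ∀ n, μ (B n) ≤ 2⁻¹ ^ n * ((n + 1 : ℝ≥0∞) ^ p.toReal)⁻¹) :
    ∃ g : X → ℝ, Measurable g ∧ MemLp g p μ ∧ ∀ n, ∀ x ∈ B n, g x = n + 1 := by
  have hp0 : p ≠ 0 := (lt_of_lt_of_le zero_lt_one hp).ne'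
  set pt := p.toReal with hpt
  have hpt0 : 0 < pt := ENNReal.toReal_pos hp0 hp'
  set G : X → ℝ≥0∞ := fun x => ∑' n, (B n).indicator (fun _ => ((n : ℝ≥0∞) + 1)) x with hG
  have hGmeas : Measurable G :=
    Measurable.ennreal_tsum fun n => measurable_const.indicator (hBm n)
  set g : X → ℝ := fun x => (G x).toReal with hg
  have hgmeas : Measurable g := hGmeas.ennreal_toReal
  have hGval : ∀ n, ∀ x ∈ B n, G x = (n : ℝ≥0∞) + 1 := by
    intro n x hx
    simp only [hG]
    rw [tsum_eq_single n]
    · simp [indicator_of_mem hx]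
    · intro m hmn
      exact indicator_of_notMem (fun hxm => (hdisj m n hmn).le_bot ⟨hxm, hx⟩) _
  have hgval : ∀ n, ∀ x ∈ B n, g x = n + 1 := by
    intro n x hx
    rw [hg]
    simp only [hGval n x hx]
    rw [ENNReal.toReal_add (by simp) (by simp)]
    simp
  have hG0 : ∀ x, (∀ n, x ∉ B n) → G x = 0 := by
    intro x hx
    simp only [hG]
    rw [ENNReal.summable.tsum_eq_zero_iff]
    exact fun n => indicator_of_notMem (hx n) _
  -- the dominating function
  set H : X → ℝ≥0∞ := fun x => ∑' n, (B n).indicator (fun _ => ((n : ℝ≥0∞) + 1) ^ pt) x with hH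
  have hpoint : ∀ x, (‖g x‖₊ : ℝ≥0∞) ^ pt ≤ H x := by
    intro x
    by_cases hx : ∃ n, x ∈ B n
    · obtain ⟨n, hxn⟩ := hx
      have h1 : (‖g x‖₊ : ℝ≥0∞) = (n : ℝ≥0∞) + 1 := by
        rw [hgval n x hxn, ← enorm_eq_nnnorm, Real.enorm_eq_ofReal (by positivity),
          ENNReal.ofReal_add (by positivity) zero_le_one, ENNReal.ofReal_natCast,
          ENNReal.ofReal_one]
      rw [h1]
      simp only [hH]
      rw [tsum_eq_single n]
      · rw [indicator_of_mem hxn]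
      · intro m hmn
        exact indicator_of_notMem (fun hxm => (hdisj m n hmn).le_bot ⟨hxm, hxn⟩) _
    · push_neg at hx
      have : g x = 0 := by simp only [hg, hG0 x hx]; simp
      rw [this]
      simp [ENNReal.zero_rpow_of_pos hpt0]
  have hHint : ∫⁻ x, H x ∂μ ≤ 2 := by
    rw [hH, lintegral_tsum (fun n => (measurable_const.indicator (hBm n)).aemeasurable)]
    have hterm : ∀ n : ℕ, ∫⁻ x, (B n).indicator (fun _ => ((n : ℝ≥0∞) + 1) ^ pt) x ∂μ
        ≤ 2⁻¹ ^ n := by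
      intro n
      rw [lintegral_indicator_const (hBm n)]
      have hne0 : ((n : ℝ≥0∞) + 1) ^ pt ≠ 0 := by
        refine (ENNReal.rpow_pos (zero_lt_one.trans_le le_add_self) (by simp)).ne'
      have hnetop : ((n : ℝ≥0∞) + 1) ^ pt ≠ ∞ :=
        ENNReal.rpow_ne_top_of_nonneg hpt0.le (by simp)
      calc ((n : ℝ≥0∞) + 1) ^ pt * μ (B n)
          ≤ ((n : ℝ≥0∞) + 1) ^ pt * (2⁻¹ ^ n * (((n : ℝ≥0∞) + 1) ^ pt)⁻¹) :=
            mul_le_mul_right (hBle n) _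
        _ = 2⁻¹ ^ n := by
            rw [mul_comm ((2 : ℝ≥0∞)⁻¹ ^ n), ← mul_assoc,
              ENNReal.mul_inv_cancel hne0 hnetop, one_mul]
    calc ∑' n, ∫⁻ x, (B n).indicator (fun _ => ((n : ℝ≥0∞) + 1) ^ pt) x ∂μ
        ≤ ∑' n : ℕ, (2 : ℝ≥0∞)⁻¹ ^ n := ENNReal.tsum_le_tsum hterm
      _ = 2 := by
          rw [ENNReal.tsum_geometric, ENNReal.one_sub_inv_two, inv_inv]
  have hmem : MemLp g p μ := by
    refine ⟨hgmeas.aestronglyMeasurable, ?_⟩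
    rw [eLpNorm_eq_lintegral_rpow_enorm_toReal hp0 hp']
    refine ENNReal.rpow_lt_top_of_nonneg (by positivity) ?_
    exact ((lintegral_mono hpoint).trans hHint).trans_lt ENNReal.ofNat_lt_top |>.ne
  exact ⟨g, hgmeas, hmem, hgval⟩

/-- If `μ` is a nonzero non-atomic Radon measure and `1 ≤ p < ∞`, then `L^p(μ)` is not
finitely generated as a module over `L^∞(μ)`: for any `f₁, …, f_N ∈ L^p(μ)` there is
`g ∈ L^p(μ)` which is not of the form `∑ i, λᵢ fᵢ` with `λᵢ ∈ L^∞(μ)`. -/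
theorem stmt4 {X : Type*} [TopologicalSpace X] [MeasurableSpace X] [BorelSpace X]
    (μ : Measure X) [μ.Regular] [NullSingletonClass μ] (hμ : μ ≠ 0)
    (p : ℝ≥0∞) (hp : 1 ≤ p) (hp' : p ≠ ∞)
    (N : ℕ) (f : Fin N → Lp ℝ p μ) :
    ∃ g : Lp ℝ p μ,
      ¬ ∃ lam : Fin N → X → ℝ,
          (∀ i, MemLp (lam i) ∞ μ) ∧
          (⇑g : X → ℝ) =ᵐ[μ] fun x => ∑ i, lam i x * (f i : X → ℝ) x := by
  classical
  obtain ⟨A, M, hAm, hA0, hAfin, hAbound⟩ := boundedSet_aux μ hμ (fun i => ⇑(f i))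
    (fun i => (Lp.stronglyMeasurable (f i)).measurable)
  set ε : ℕ → ℝ≥0∞ := fun n => 2⁻¹ ^ n * ((n + 1 : ℝ≥0∞) ^ p.toReal)⁻¹ with hεdef
  have hε : ∀ n, ε n ≠ 0 := by
    intro n
    refine mul_ne_zero (pow_ne_zero n (by simp)) ?_
    exact ENNReal.inv_ne_zero.mpr (ENNReal.rpow_ne_top_of_nonneg ENNReal.toReal_nonneg (by simp))
  obtain ⟨B, hBm, hBsubA, hB0, hBle, hdisj⟩ := seq_aux μ hAm hA0 hAfin ε hε
  obtain ⟨g0, hg0meas, hg0mem, hg0val⟩ := g_aux μ p hp hp' B hBm hdisj hBle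
  refine ⟨hg0mem.toLp g0, ?_⟩
  rintro ⟨lam, hlam, heq⟩
  have hco : (⇑(hg0mem.toLp g0) : X → ℝ) =ᵐ[μ] g0 := hg0mem.coeFn_toLp
  have heq' : g0 =ᵐ[μ] fun x => ∑ i, lam i x * (f i : X → ℝ) x := hco.symm.trans heq
  set C : Fin N → ℝ := fun i => (eLpNorm (lam i) ∞ μ).toReal with hCdef
  have hC : ∀ i, ∀ᵐ x ∂μ, |lam i x| ≤ C i := by
    intro i
    have h1 : eLpNormEssSup (lam i) μ ≠ ∞ := by
      have := (hlam i).2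
      rwa [eLpNorm_exponent_top, lt_top_iff_ne_top] at this
    filter_upwards [ae_le_eLpNormEssSup (f := lam i) (μ := μ)] with x hx
    have h2 := ENNReal.toReal_mono h1 hx
    rw [toReal_enorm, Real.norm_eq_abs] at h2
    rw [hCdef]
    simpa [eLpNorm_exponent_top] using h2
  have hCnonneg : ∀ i, 0 ≤ C i := fun i => ENNReal.toReal_nonneg
  obtain ⟨n, hn⟩ := exists_nat_gt (∑ i, C i * max M 0)
  have hae : ∀ᵐ x ∂μ, g0 x = (∑ i, lam i x * (f i : X → ℝ) x) ∧ ∀ i, |lam i x| ≤ C i := by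
    filter_upwards [heq', ae_all_iff.mpr hC] with x h1 h2
    exact ⟨h1, h2⟩
  obtain ⟨x, hxB, hx1, hx2⟩ : ∃ x, x ∈ B n ∧
      (g0 x = (∑ i, lam i x * (f i : X → ℝ) x) ∧ ∀ i, |lam i x| ≤ C i) := by
    by_contra hcon
    have hsub : B n ⊆ {x | ¬ (g0 x = (∑ i, lam i x * (f i : X → ℝ) x) ∧
        ∀ i, |lam i x| ≤ C i)} := fun x hx hP => hcon ⟨x, hx, hP⟩
    have : μ (B n) = 0 := measure_mono_null hsub hae
    exact (hB0 n).ne' this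
  have hxA : x ∈ A := hBsubA n hxB
  have hgx : g0 x = n + 1 := hg0val n x hxB
  have hbound : |∑ i, lam i x * (f i : X → ℝ) x| ≤ ∑ i, C i * max M 0 := by
    refine (Finset.abs_sum_le_sum_abs _ _).trans (Finset.sum_le_sum fun i _ => ?_)
    rw [abs_mul]
    exact mul_le_mul (hx2 i) ((hAbound x hxA i).trans (le_max_left _ _)) (abs_nonneg _)
      (hCnonneg i)
  rw [← hx1, hgx, abs_of_nonneg (by positivity)] at hbound
  have : ((n : ℝ) + 1) < (n : ℝ) + 1 := lt_of_le_of_lt hbound (hn.trans (by linarith))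
  exact this.false
end

section
/- Let $\mu$ be a non-atomic finite measure and $1 \leq p < \infty$. Then every bounded $L^\infty(\mu)$-module homomorphism $\Phi : L^p(\mu) \to L^\infty(\mu)$ is identically zero. -/
open MeasureTheory
open scoped ENNReal

/-- If `μ` is a non-atomic finite measure and `1 ≤ p < ∞`, then every bounded
`L^∞(μ)`-module homomorphism `Φ : L^p(μ) → L^∞(μ)` is identically zero.  The module
homomorphism property is expressed pointwise: if `g = λ · f` a.e. with `λ ∈ L^∞(μ)`,
then `Φ g = λ · Φ f` a.e. -/
theorem stmt5 {X : Type*} [MeasurableSpace X] (μ : Measure X) [IsFiniteMeasure μ]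
    (hna : ∀ A : Set X, MeasurableSet A → 0 < μ A →
      ∀ t : ℝ≥0∞, 0 < t → t < μ A → ∃ B ⊆ A, MeasurableSet B ∧ μ B = t)
    (p : ℝ≥0∞) [Fact (1 ≤ p)] (hp' : p ≠ ∞)
    (Φ : Lp ℝ p μ →L[ℝ] Lp ℝ ∞ μ)
    (hmod : ∀ (lam : X → ℝ), MemLp lam ∞ μ → ∀ f g : Lp ℝ p μ,
      (⇑g : X → ℝ) =ᵐ[μ] (fun x => lam x * (f : X → ℝ) x) →
      (⇑(Φ g) : X → ℝ) =ᵐ[μ] fun x => lam x * (Φ f : X → ℝ) x) :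
    Φ = 0 := by
  refine ContinuousLinearMap.ext fun f => ?_
  rw [ContinuousLinearMap.zero_apply]
  by_contra hne
  have hc : (0:ℝ) < ‖Φ f‖ := norm_pos_iff.mpr hne
  set c : ℝ := ‖Φ f‖ with hc_def
  set h : X → ℝ := ⇑(Φ f) with hh
  have hsm : StronglyMeasurable h := Lp.stronglyMeasurable (Φ f)
  set A : Set X := {x | c / 2 ≤ |h x|} with hA_def
  have hAmeas : MeasurableSet A := by
    have : Measurable fun x => |h x| := hsm.measurable.abs
    exact measurableSet_le measurable_const this
  have hApos : 0 < μ A := by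
    by_contra hA0
    push_neg at hA0
    have hA0' : μ A = 0 := le_antisymm hA0 zero_le
    have hae : ∀ᵐ x ∂μ, ‖h x‖ ≤ c / 2 := by
      have : ∀ᵐ x ∂μ, x ∉ A := ae_iff.mpr (by simpa using hA0')
      filter_upwards [this] with x hx
      simp only [hA_def, Set.mem_setOf_eq, not_le] at hx
      exact le_of_lt (by simpa [Real.norm_eq_abs] using hx)
    have h1 : eLpNorm h ∞ μ ≤ ENNReal.ofReal (c / 2) := by
      rw [eLpNorm_exponent_top]
      exact eLpNormEssSup_le_of_ae_bound hae
    have h2 : ‖Φ f‖ ≤ c / 2 := by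
      rw [Lp.norm_def]
      calc (eLpNorm (⇑(Φ f)) ∞ μ).toReal ≤ (ENNReal.ofReal (c / 2)).toReal :=
            ENNReal.toReal_mono ENNReal.ofReal_ne_top h1
        _ = c / 2 := ENNReal.toReal_ofReal (by positivity)
    rw [← hc_def] at h2; linarith
  -- choose δ from absolute continuity of the p-norm
  set ε : ℝ := c / (4 * (‖Φ‖ + 1)) with hε_def
  have hΦnn : (0:ℝ) ≤ ‖Φ‖ := norm_nonneg _
  have hεpos : 0 < ε := by positivity
  obtain ⟨δ, hδpos, hδ⟩ := (Lp.memLp f).eLpNorm_indicator_le (Fact.out : 1 ≤ p) hp' hεpos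
  set t : ℝ≥0∞ := min (ENNReal.ofReal δ) (μ A / 2) with ht_def
  have ht0 : 0 < t :=
    lt_min (ENNReal.ofReal_pos.mpr hδpos) (ENNReal.half_pos hApos.ne')
  have htA : t < μ A :=
    (min_le_right _ _).trans_lt (ENNReal.half_lt_self hApos.ne' (measure_ne_top μ A))
  obtain ⟨B, hBA, hBmeas, hμB⟩ := hna A hAmeas hApos t ht0 htA
  have hμBδ : μ B ≤ ENNReal.ofReal δ := hμB ▸ min_le_left _ _
  have hμBpos : 0 < μ B := hμB ▸ ht0
  -- the truncated element g
  have hmem : MemLp (B.indicator ⇑f) p μ := (Lp.memLp f).indicator hBmeas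
  set g : Lp ℝ p μ := hmem.toLp (B.indicator ⇑f) with hg_def
  have hg_norm : ‖g‖ ≤ ε := by
    rw [Lp.norm_def, eLpNorm_congr_ae (MemLp.coeFn_toLp hmem)]
    calc (eLpNorm (B.indicator ⇑f) p μ).toReal ≤ (ENNReal.ofReal ε).toReal :=
          ENNReal.toReal_mono ENNReal.ofReal_ne_top (hδ B hBmeas hμBδ)
      _ = ε := ENNReal.toReal_ofReal hεpos.le
  -- the module relation
  set lam : X → ℝ := B.indicator (fun _ => (1:ℝ)) with hlam_def
  have hlam : MemLp lam ∞ μ := by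
    refine memLp_top_of_bound
      ((measurable_const.indicator hBmeas).aestronglyMeasurable) 1 (ae_of_all _ fun x => ?_)
    by_cases hx : x ∈ B <;>
      simp [hlam_def, Set.indicator_of_mem, Set.indicator_of_notMem, hx]
  have hmul : (⇑g : X → ℝ) =ᵐ[μ] fun x => lam x * (f : X → ℝ) x := by
    refine (MemLp.coeFn_toLp hmem).trans (ae_of_all _ fun x => ?_)
    by_cases hx : x ∈ B <;>
      simp [hlam_def, Set.indicator_of_mem, Set.indicator_of_notMem, hx]
  have hΦg : (⇑(Φ g) : X → ℝ) =ᵐ[μ] fun x => lam x * h x := hmod lam hlam f g hmul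
  -- a.e. bound for Φ g
  have hΦg_norm : ‖Φ g‖ < c / 2 := by
    have h1 : ‖Φ g‖ ≤ ‖Φ‖ * ‖g‖ := Φ.le_opNorm g
    have h2 : ‖Φ‖ * ‖g‖ ≤ ‖Φ‖ * ε := mul_le_mul_of_nonneg_left hg_norm hΦnn
    have hne1 : ‖Φ‖ + 1 ≠ 0 := by positivity
    have h5 : (‖Φ‖ + 1) * ε = c / 4 := by
      rw [hε_def]
      field_simp
    have h3 : ‖Φ‖ * ε < c / 2 := by nlinarith

    linarith
  have hbound : ∀ᵐ x ∂μ, ‖(⇑(Φ g) : X → ℝ) x‖ ≤ ‖Φ g‖ := by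
    have hae := ae_le_eLpNormEssSup (f := (⇑(Φ g) : X → ℝ)) (μ := μ)
    have hfin : eLpNormEssSup (⇑(Φ g) : X → ℝ) μ ≠ ∞ := by
      rw [← eLpNorm_exponent_top]
      exact (Lp.eLpNorm_lt_top (Φ g)).ne
    filter_upwards [hae] with x hx
    have : (‖(⇑(Φ g) : X → ℝ) x‖₊ : ℝ≥0∞).toReal ≤ (eLpNormEssSup (⇑(Φ g) : X → ℝ) μ).toReal :=
      ENNReal.toReal_mono hfin hx
    simpa [Lp.norm_def, eLpNorm_exponent_top] using this
  -- derive contradiction on B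
  have hBnull : μ B = 0 := by
    refine measure_mono_null (fun x hx => ?_) (ae_iff.mp (hΦg.and hbound))
    simp only [Set.mem_setOf_eq, not_and_or]
    by_cases heq : (⇑(Φ g) : X → ℝ) x = lam x * h x
    · right
      intro hle
      rw [heq] at hle
      have hlamx : lam x = 1 := Set.indicator_of_mem hx _
      rw [hlamx, one_mul, Real.norm_eq_abs] at hle
      have hxA : c / 2 ≤ |h x| := hBA hx
      linarith [lt_of_le_of_lt hle hΦg_norm]
    · left; exact heq
  exact hμBpos.ne' hBnull
end

section
/- Let $\mu$ be a measure, $1 \leq p < \infty$, $k \geq 2$, and let $N$ be a Banach space which is an $L^\infty(\mu)$-module. Then every bounded alternating $L^\infty(\mu)$-multilinear map $T : (L^p(\mu))^k \to N$ is identically zero. -/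
open MeasureTheory
open scoped ENNReal

/-- Let `1 ≤ p < ∞`, `k ≥ 2`, and let `N` be a Banach space which is an `L^∞(μ)`-module
(the module action is encoded by a map `A` sending an essentially bounded function to an
operator on `N`, compatible with a.e. equality, additive, multiplicative, unital and
norm-bounded).  Then every bounded alternating `L^∞(μ)`-multilinear map
`T : (L^p(μ))^k → N` is identically zero. -/
theorem stmt6 {X : Type*} [MeasurableSpace X] (μ : Measure X)
    (p : ℝ≥0∞) [Fact (1 ≤ p)] (hp' : p ≠ ∞) (k : ℕ) (hk : 2 ≤ k)
    {N : Type*} [NormedAddCommGroup N] [NormedSpace ℝ N] [CompleteSpace N]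
    -- the `L^∞(μ)`-module structure on `N`:
    (A : (X → ℝ) → N → N)
    (hA_ae : ∀ lam lam' : X → ℝ, lam =ᵐ[μ] lam' → A lam = A lam')
    (hA_addfun : ∀ lam lam' : X → ℝ, ∀ n, A (lam + lam') n = A lam n + A lam' n)
    (hA_add : ∀ lam : X → ℝ, ∀ n m, A lam (n + m) = A lam n + A lam m)
    (hA_mul : ∀ lam lam' : X → ℝ, ∀ n, A (lam * lam') n = A lam (A lam' n))
    (hA_one : ∀ n, A (fun _ => (1 : ℝ)) n = n)
    (hA_bdd : ∀ lam : X → ℝ, MemLp lam ∞ μ →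
      ∀ n, ‖A lam n‖ ≤ (eLpNorm lam ∞ μ).toReal * ‖n‖)
    -- the alternating `L^∞(μ)`-multilinear map:
    (T : (Fin k → Lp ℝ p μ) → N)
    (hT_add : ∀ (f : Fin k → Lp ℝ p μ) (i : Fin k) (g h : Lp ℝ p μ),
      T (Function.update f i (g + h)) =
        T (Function.update f i g) + T (Function.update f i h))
    (hT_smul : ∀ (f : Fin k → Lp ℝ p μ) (i : Fin k) (lam : X → ℝ), MemLp lam ∞ μ →
      ∀ g : Lp ℝ p μ, (⇑g : X → ℝ) =ᵐ[μ] (fun x => lam x * (f i : X → ℝ) x) →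
      T (Function.update f i g) = A lam (T f))
    (hT_alt : ∀ (f : Fin k → Lp ℝ p μ) (i j : Fin k), i ≠ j → f i = f j → T f = 0)
    (hT_bdd : ∃ C : ℝ, ∀ f : Fin k → Lp ℝ p μ, ‖T f‖ ≤ C * ∏ i, ‖f i‖) :
    ∀ f : Fin k → Lp ℝ p μ, T f = 0 := by
  obtain ⟨C, hC⟩ := hT_bdd
  have hC' : ∀ f : Fin k → Lp ℝ p μ, ‖T f‖ ≤ |C| * ∏ i, ‖f i‖ := fun f =>
    (hC f).trans (mul_le_mul_of_nonneg_right (le_abs_self C)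
      (Finset.prod_nonneg fun i _ => norm_nonneg _))
  -- `A lam 0 = 0`
  have hA0 : ∀ lam : X → ℝ, A lam 0 = 0 := by
    intro lam
    have h := hA_add lam 0 0
    rw [add_zero] at h
    exact left_eq_add.mp h
  -- subtraction in each slot
  have hT_sub : ∀ (f : Fin k → Lp ℝ p μ) (i : Fin k) (g h : Lp ℝ p μ),
      T (Function.update f i (g - h)) =
        T (Function.update f i g) - T (Function.update f i h) := by
    intro f i g h
    have h2 := hT_add f i (g - h) h
    rw [sub_add_cancel] at h2
    rw [eq_sub_iff_add_eq, ← h2]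
  -- continuity in each slot
  have hcont : ∀ (f : Fin k → Lp ℝ p μ) (i : Fin k),
      Continuous (fun g => T (Function.update f i g)) := by
    intro f i
    refine LipschitzWith.continuous
      (K := ⟨|C| * ∏ j ∈ Finset.univ.erase i, ‖f j‖, by positivity⟩)
      (LipschitzWith.of_dist_le_mul fun g h => ?_)
    rw [dist_eq_norm, dist_eq_norm, ← hT_sub]
    calc ‖T (Function.update f i (g - h))‖
        ≤ |C| * ∏ j, ‖Function.update f i (g - h) j‖ := hC' _
      _ = |C| * (‖g - h‖ * ∏ j ∈ Finset.univ.erase i, ‖f j‖) := by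
          congr 1
          have : (fun j => ‖Function.update f i (g - h) j‖)
              = Function.update (fun j => ‖f j‖) i ‖g - h‖ := by
            funext j
            rcases eq_or_ne j i with rfl | hj
            · simp
            · simp [Function.update_of_ne hj]
          rw [this, Finset.prod_update_of_mem (Finset.mem_univ i), Finset.erase_eq]
      _ = (|C| * ∏ j ∈ Finset.univ.erase i, ‖f j‖) * ‖g - h‖ := by ring
  -- base case: all coordinates are (classes of) simple functions
  have base : ∀ f : Fin k → Lp ℝ p μ, (∀ i, f i ∈ Lp.simpleFunc ℝ p μ) → T f = 0 := by
    intro f hf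
    set s : Fin k → SimpleFunc X ℝ := fun i => Lp.simpleFunc.toSimpleFunc ⟨f i, hf i⟩ with hs_def
    have hs : ∀ i, ⇑(s i) =ᵐ[μ] ⇑(f i) := fun i =>
      Lp.simpleFunc.toSimpleFunc_eq_toFun ⟨f i, hf i⟩
    set E : Set X := ⋃ i, Function.support (s i) with hE_def
    have hE : MeasurableSet E := MeasurableSet.iUnion fun i => (s i).measurableSet_support
    have hμE : μ E ≠ ∞ := by
      refine ne_of_lt (lt_of_le_of_lt (measure_iUnion_le _) ?_)
      rw [tsum_fintype]
      refine ENNReal.sum_lt_top.mpr fun i _ => ?_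
      refine (s i).measure_support_lt_top_of_memLp ?_ ?_ hp'
      · exact (Lp.memLp (f i)).ae_eq (hs i).symm
      · have h1 : (1 : ℝ≥0∞) ≤ p := Fact.out
        exact fun h => by simp [h] at h1
    set χ : Lp ℝ p μ := indicatorConstLp p hE hμE (1 : ℝ) with hχ_def
    have hχ : ⇑χ =ᵐ[μ] E.indicator fun _ => (1 : ℝ) := indicatorConstLp_coeFn
    have key : ∀ m, m ≤ k →
        T (fun j : Fin k => if (j : ℕ) < m then f j else χ) = 0 := by
      intro m
      induction m with
      | zero =>
        intro _
        have h0 : (fun j : Fin k => if (j : ℕ) < 0 then f j else χ) = fun _ => χ := by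
          funext j; simp
        rw [h0]
        exact hT_alt _ ⟨0, by omega⟩ ⟨1, by omega⟩ (by simp [Fin.ext_iff]) rfl
      | succ m ih =>
        intro hm
        have hmk : m < k := hm
        set i : Fin k := ⟨m, hmk⟩ with hi_def
        set F : Fin k → Lp ℝ p μ := fun j => if (j : ℕ) < m then f j else χ with hF_def
        have hupd : (fun j : Fin k => if (j : ℕ) < m + 1 then f j else χ)
            = Function.update F i (f i) := by
          funext j
          rcases eq_or_ne j i with rfl | hj
          · simp [hi_def]
          · rw [Function.update_of_ne hj]
            have hjm : (j : ℕ) ≠ m := fun h => hj (Fin.ext h)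
            by_cases h : (j : ℕ) < m
            · simp [hF_def, h, Nat.lt_succ_of_lt h]
            · have h2 : ¬ (j : ℕ) < m + 1 := by omega
              simp [hF_def, h, h2]
        have hFi : F i = χ := by simp [hF_def, hi_def]
        have hae : (⇑(f i) : X → ℝ) =ᵐ[μ] fun x => (s i) x * (F i : X → ℝ) x := by
          rw [hFi]
          filter_upwards [hχ, hs i] with x h1 h2
          rw [h1]
          by_cases hx : x ∈ E
          · simp [Set.indicator_of_mem hx, h2]
          · have hsx : (s i) x = 0 := by
              by_contra h
              exact hx (Set.mem_iUnion.2 ⟨i, h⟩)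
            rw [Set.indicator_of_notMem hx, mul_zero, ← h2, hsx]
        rw [hupd, hT_smul F i (⇑(s i)) ((s i).memLp_top μ) (f i) hae,
          ih (le_of_lt hm), hA0]
    have hfk : f = fun j : Fin k => if (j : ℕ) < k then f j else χ := by
      funext j; simp [j.isLt]
    rw [hfk]
    exact key k le_rfl
  -- extend from the dense set coordinate by coordinate
  have main : ∀ m : ℕ, ∀ f : Fin k → Lp ℝ p μ,
      (∀ j : Fin k, m ≤ (j : ℕ) → f j ∈ Lp.simpleFunc ℝ p μ) → T f = 0 := by
    intro m
    induction m with
    | zero => exact fun f hf => base f fun i => hf i (Nat.zero_le _)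
    | succ m ih =>
      intro f hf
      by_cases hmk : m < k
      · set i : Fin k := ⟨m, hmk⟩ with hi_def
        have heq : (fun g => T (Function.update f i g)) = fun _ => 0 := by
          refine Continuous.ext_on (Lp.simpleFunc.dense hp') (hcont f i) continuous_const ?_
          intro g hg
          refine ih _ fun j hj => ?_
          rcases eq_or_ne j i with rfl | hji
          · rwa [Function.update_self]
          · rw [Function.update_of_ne hji]
            refine hf j ?_
            have : (j : ℕ) ≠ m := fun h => hji (Fin.ext h)
            omega
        have h2 := congrFun heq (f i)
        rwa [Function.update_eq_self] at h2
      · refine ih f fun j hj => absurd hj ?_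
        have := j.isLt
        omega
  intro f
  refine main k f fun j hj => absurd hj ?_
  have := j.isLt
  omega
end

section
/- Let $\mu = \sum_{n} c_n \delta_{p_n}$ be a countable sum of Dirac masses with $c_n > 0$ at distinct points $p_n$, and let $1 \leq p < \infty$. Then every bounded $L^\infty(\mu)$-module homomorphism $\varphi : L^p(\mu) \to L^\infty(\mu)$ is of the form $\varphi(f) = \sum_n f(p_n) \lambda_n \chi_{\{p_n\}}$ for a unique real sequence $(\lambda_n)$ with $\sup_n |\lambda_n| c_n^{-1/p} < \infty$; conversely every such sequence defines a bounded homomorphism, and the operator norm of $\varphi$ equals $\sup_n |\lambda_n| c_n^{-1/p}$. -/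
open MeasureTheory
open scoped ENNReal

/-- The `L^∞(μ)`-module homomorphism property for a bounded linear map
`φ : L^p(μ) → L^∞(μ)`, expressed pointwise. -/
def IsLinftyModuleHom {X : Type*} [MeasurableSpace X] (μ : Measure X)
    (p : ℝ≥0∞) [Fact (1 ≤ p)] (φ : Lp ℝ p μ →L[ℝ] Lp ℝ ∞ μ) : Prop :=
  ∀ lam0 : X → ℝ, MemLp lam0 ∞ μ → ∀ f g : Lp ℝ p μ,
    (⇑g : X → ℝ) =ᵐ[μ] (fun x => lam0 x * (f : X → ℝ) x) →
    (⇑(φ g) : X → ℝ) =ᵐ[μ] fun x => lam0 x * (φ f : X → ℝ) x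

/-- The representation of `φ` by the sequence `lam`:
`φ(f) = ∑ₙ f(pₙ) λₙ χ_{pₙ}` almost everywhere. -/
def RepresentedBy {X : Type*} [MeasurableSpace X] (μ : Measure X)
    (p : ℝ≥0∞) [Fact (1 ≤ p)] (pt : ℕ → X)
    (φ : Lp ℝ p μ →L[ℝ] Lp ℝ ∞ μ) (lam : ℕ → ℝ) : Prop :=
  ∀ f : Lp ℝ p μ,
    (⇑(φ f) : X → ℝ) =ᵐ[μ]
      fun x => ∑' n, (f : X → ℝ) (pt n) * lam n *
        Set.indicator {pt n} (fun _ => (1 : ℝ)) x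

set_option linter.unusedSectionVars false

namespace Stmt7Aux

variable {X : Type*} [MeasurableSpace X] [MeasurableSingletonClass X]

/-- A real function with countable support is measurable when singletons are measurable. -/
lemma measurable_of_countable_support {s : Set X} (hs : s.Countable) {f : X → ℝ}
    (hf : ∀ x, x ∉ s → f x = 0) : Measurable f := by
  intro A hA
  by_cases h0 : (0 : ℝ) ∈ A
  · have hset : f ⁻¹' A = (f ⁻¹' A ∩ s) ∪ sᶜ := by
      ext x
      by_cases hx : x ∈ s
      · simp [hx]
      · simp [hx, hf x hx, h0]
    rw [hset]
    exact ((hs.mono Set.inter_subset_right).measurableSet).union hs.measurableSet.compl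
  · have hset : f ⁻¹' A = f ⁻¹' A ∩ s := by
      ext x
      refine ⟨fun hx => ⟨hx, ?_⟩, fun hx => hx.1⟩
      by_contra hxs
      rw [Set.mem_preimage, hf x hxs] at hx
      exact h0 hx
    rw [hset]
    exact (hs.mono Set.inter_subset_right).measurableSet

variable {pt : ℕ → X} {c : ℕ → ℝ} {μ : Measure X}

section Measure

variable (hpt : Function.Injective pt) (hc : ∀ n, 0 < c n)
  (hμ : μ = Measure.sum fun n => ENNReal.ofReal (c n) • Measure.dirac (pt n))

include hpt hc hμ

lemma measure_singleton (n : ℕ) : μ {pt n} = ENNReal.ofReal (c n) := by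
  rw [hμ, Measure.sum_apply _ (measurableSet_singleton _)]
  rw [tsum_eq_single n]
  · simp [Measure.smul_apply, Measure.dirac_apply' _ (measurableSet_singleton (pt n)),
      Set.indicator_of_mem]
  · intro m hm
    simp [Measure.smul_apply, Measure.dirac_apply' _ (measurableSet_singleton (pt n)),
      Set.indicator_of_notMem]
    exact Or.inr fun h => hm (hpt h)

lemma measure_compl_range : μ (Set.range pt)ᶜ = 0 := by
  rw [hμ, Measure.sum_apply _ (Set.countable_range pt).measurableSet.compl]
  have : ∀ n : ℕ, (ENNReal.ofReal (c n) • Measure.dirac (pt n)) (Set.range pt)ᶜ = 0 := by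
    intro n
    rw [Measure.smul_apply, Measure.dirac_apply' _ (Set.countable_range pt).measurableSet.compl,
      Set.indicator_of_notMem (by simp : pt n ∉ (Set.range pt)ᶜ)]
    simp
  simp [this]

lemma ae_iff_forall {P : X → Prop} : (∀ᵐ x ∂μ, P x) ↔ ∀ n, P (pt n) := by
  rw [ae_iff]
  constructor
  · intro h n
    by_contra hn
    have h1 : μ {pt n} ≤ μ {x | ¬P x} := measure_mono (Set.singleton_subset_iff.2 hn)
    rw [h, measure_singleton hpt hc hμ n] at h1
    exact absurd (le_antisymm h1 zero_le) (ENNReal.ofReal_pos.2 (hc n)).ne'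
  · intro h
    refine measure_mono_null ?_ (measure_compl_range hpt hc hμ)
    intro x hx
    rcases em (x ∈ Set.range pt) with ⟨n, rfl⟩ | hxr
    · exact absurd (h n) hx
    · exact hxr

lemma eq_at_pt {f g : X → ℝ} (hfg : f =ᵐ[μ] g) (n : ℕ) : f (pt n) = g (pt n) :=
  ((ae_iff_forall hpt hc hμ).1 hfg) n

lemma point_norm_le {p : ℝ≥0∞} [Fact (1 ≤ p)] (hp' : p ≠ ∞) (f : Lp ℝ p μ) (n : ℕ) :
    |(f : X → ℝ) (pt n)| * c n ^ (1 / p.toReal) ≤ ‖f‖ := by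
  have hp1 : (1 : ℝ≥0∞) ≤ p := Fact.out
  have hp0 : p ≠ 0 := (lt_of_lt_of_le zero_lt_one hp1).ne'
  have hq : 0 < p.toReal := ENNReal.toReal_pos hp0 hp'
  have h2 : (‖(f : X → ℝ) (pt n)‖₊ : ℝ≥0∞) ^ p.toReal * μ {pt n}
      ≤ ∫⁻ x, (‖(f : X → ℝ) x‖₊ : ℝ≥0∞) ^ p.toReal ∂μ := by
    rw [← lintegral_singleton (fun x => (‖(f : X → ℝ) x‖₊ : ℝ≥0∞) ^ p.toReal) (pt n)]
    exact setLIntegral_le_lintegral _ _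
  have h3 : ((‖(f : X → ℝ) (pt n)‖₊ : ℝ≥0∞) ^ p.toReal * μ {pt n}) ^ (1 / p.toReal)
      ≤ eLpNorm (f : X → ℝ) p μ := by
    rw [eLpNorm_eq_lintegral_rpow_enorm_toReal hp0 hp']
    exact ENNReal.rpow_le_rpow h2 (by positivity)
  rw [ENNReal.mul_rpow_of_nonneg _ _ (by positivity), ← ENNReal.rpow_mul,
    mul_one_div_cancel hq.ne', ENNReal.rpow_one] at h3
  have h4 := ENNReal.toReal_mono (Lp.eLpNorm_ne_top f) h3
  rw [ENNReal.toReal_mul, ← ENNReal.toReal_rpow, ENNReal.coe_toReal, coe_nnnorm,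
    measure_singleton hpt hc hμ n, ENNReal.toReal_ofReal (hc n).le] at h4
  rw [← Lp.norm_def] at h4
  simpa [Real.norm_eq_abs] using h4

lemma linf_point_le (g : Lp ℝ ∞ μ) (n : ℕ) : |(g : X → ℝ) (pt n)| ≤ ‖g‖ := by
  have h := (ae_iff_forall hpt hc hμ (P := fun y => (‖(g : X → ℝ) y‖₊ : ℝ≥0∞)
      ≤ eLpNormEssSup (g : X → ℝ) μ)).1 ae_le_eLpNormEssSup n
  have h2 := ENNReal.toReal_mono (by
      rw [← eLpNorm_exponent_top]; exact Lp.eLpNorm_ne_top g) h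
  rw [ENNReal.coe_toReal, coe_nnnorm] at h2
  rw [Lp.norm_def, eLpNorm_exponent_top]
  simpa [Real.norm_eq_abs] using h2

lemma linf_norm_le (g : Lp ℝ ∞ μ) {C : ℝ} (hC0 : 0 ≤ C)
    (h : ∀ n, |(g : X → ℝ) (pt n)| ≤ C) : ‖g‖ ≤ C := by
  have hae : ∀ᵐ x ∂μ, ‖(g : X → ℝ) x‖ ≤ C :=
    (ae_iff_forall hpt hc hμ).2 (by simpa [Real.norm_eq_abs] using h)
  have h2 := eLpNormEssSup_le_of_ae_bound hae
  rw [Lp.norm_def, eLpNorm_exponent_top]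
  exact ENNReal.toReal_le_of_le_ofReal hC0 h2

end Measure

/-- The representing function `x ↦ ∑ₙ v(pₙ) λₙ χ_{pₙ}(x)`. -/
noncomputable def Gf (pt : ℕ → X) (lam : ℕ → ℝ) (v : X → ℝ) : X → ℝ :=
  fun x => ∑' n, v (pt n) * lam n * Set.indicator {pt n} (fun _ => (1 : ℝ)) x

lemma Gf_pt (hpt : Function.Injective pt) (lam : ℕ → ℝ) (v : X → ℝ) (m : ℕ) :
    Gf pt lam v (pt m) = v (pt m) * lam m := by
  unfold Gf
  rw [tsum_eq_single m]
  · rw [Set.indicator_of_mem (Set.mem_singleton _), mul_one]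
  · intro b hb
    rw [Set.indicator_of_notMem (fun h => hb (hpt (Set.mem_singleton_iff.1 h)).symm), mul_zero]

lemma Gf_off (pt : ℕ → X) (lam : ℕ → ℝ) (v : X → ℝ) {x : X} (hx : x ∉ Set.range pt) :
    Gf pt lam v x = 0 := by
  unfold Gf
  have h : ∀ n : ℕ, v (pt n) * lam n * Set.indicator {pt n} (fun _ => (1 : ℝ)) x = 0 := by
    intro n
    rw [Set.indicator_of_notMem (fun h => hx ⟨n, (Set.mem_singleton_iff.1 h).symm⟩), mul_zero]
  rw [tsum_congr h, tsum_zero]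

lemma Gf_measurable (pt : ℕ → X) (lam : ℕ → ℝ) (v : X → ℝ) : Measurable (Gf pt lam v) :=
  measurable_of_countable_support (Set.countable_range pt)
    (fun _ hx => Gf_off pt lam v hx)

lemma Gf_congr (pt : ℕ → X) (lam : ℕ → ℝ) {v w : X → ℝ} (h : ∀ n, v (pt n) = w (pt n)) :
    Gf pt lam v = Gf pt lam w := by
  funext x
  exact tsum_congr fun n => by rw [h n]

section Main

variable (hpt : Function.Injective pt) (hc : ∀ n, 0 < c n)
  (hμ : μ = Measure.sum fun n => ENNReal.ofReal (c n) • Measure.dirac (pt n))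
  (p : ℝ≥0∞) [Fact (1 ≤ p)]

include hpt hc hμ

lemma C_nonneg {lam : ℕ → ℝ} {C : ℝ} (hub : ∀ n, |lam n| * c n ^ (-(1 / p.toReal)) ≤ C) :
    0 ≤ C :=
  le_trans (mul_nonneg (abs_nonneg _) (Real.rpow_nonneg (hc 0).le _)) (hub 0)

lemma lam_le {lam : ℕ → ℝ} {C : ℝ} (hub : ∀ n, |lam n| * c n ^ (-(1 / p.toReal)) ≤ C)
    (m : ℕ) : |lam m| ≤ C * c m ^ (1 / p.toReal) := by
  have hr : 0 < c m ^ (1 / p.toReal) := Real.rpow_pos_of_pos (hc m) _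
  rw [← div_le_iff₀ hr]
  have h := hub m
  rwa [Real.rpow_neg (hc m).le, ← div_eq_mul_inv] at h

lemma le_lam_bound {lam : ℕ → ℝ} {C : ℝ} (h : ∀ m, |lam m| ≤ C * c m ^ (1 / p.toReal))
    (n : ℕ) : |lam n| * c n ^ (-(1 / p.toReal)) ≤ C := by
  have hr : 0 < c n ^ (1 / p.toReal) := Real.rpow_pos_of_pos (hc n) _
  rw [Real.rpow_neg (hc n).le, ← div_eq_mul_inv, div_le_iff₀ hr]
  exact h n

lemma Gf_bound (hp' : p ≠ ∞) {lam : ℕ → ℝ} {C : ℝ}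
    (hub : ∀ n, |lam n| * c n ^ (-(1 / p.toReal)) ≤ C) (f : Lp ℝ p μ) (x : X) :
    |Gf pt lam (f : X → ℝ) x| ≤ C * ‖f‖ := by
  have hC0 : 0 ≤ C := C_nonneg hpt hc hμ p hub
  rcases em (x ∈ Set.range pt) with ⟨m, rfl⟩ | hx
  · rw [Gf_pt hpt, abs_mul]
    have h1 := point_norm_le hpt hc hμ hp' f m
    have h2 := lam_le hpt hc hμ p hub m
    calc |(f : X → ℝ) (pt m)| * |lam m|
        ≤ |(f : X → ℝ) (pt m)| * (C * c m ^ (1 / p.toReal)) :=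
          mul_le_mul_of_nonneg_left h2 (abs_nonneg _)
      _ = C * (|(f : X → ℝ) (pt m)| * c m ^ (1 / p.toReal)) := by ring
      _ ≤ C * ‖f‖ := mul_le_mul_of_nonneg_left h1 hC0
  · rw [Gf_off pt lam _ hx, abs_zero]
    exact mul_nonneg hC0 (norm_nonneg f)

lemma Gf_memLinf (hp' : p ≠ ∞) {lam : ℕ → ℝ} {C : ℝ}
    (hub : ∀ n, |lam n| * c n ^ (-(1 / p.toReal)) ≤ C) (f : Lp ℝ p μ) :
    MemLp (Gf pt lam (f : X → ℝ)) ∞ μ :=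
  memLp_top_of_bound (Gf_measurable pt lam _).aestronglyMeasurable (C * ‖f‖)
    (Filter.Eventually.of_forall fun x => by
      simpa [Real.norm_eq_abs] using Gf_bound hpt hc hμ p hp' hub f x)

lemma chi_memℒp (n : ℕ) : MemLp (Set.indicator {pt n} fun _ => (1 : ℝ)) p μ :=
  memLp_indicator_const p (measurableSet_singleton _) 1
    (Or.inr (by rw [measure_singleton hpt hc hμ]; exact ENNReal.ofReal_ne_top))

lemma chi_coe_pt (n m : ℕ) :
    ((chi_memℒp hpt hc hμ p n).toLp _ : X → ℝ) (pt m) =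
      Set.indicator {pt n} (fun _ => (1 : ℝ)) (pt m) :=
  eq_at_pt hpt hc hμ (MemLp.coeFn_toLp _) m

lemma chi_norm (hp' : p ≠ ∞) (n : ℕ) :
    ‖(chi_memℒp hpt hc hμ p n).toLp _‖ = c n ^ (1 / p.toReal) := by
  have hp1 : (1 : ℝ≥0∞) ≤ p := Fact.out
  have hp0 : p ≠ 0 := (lt_of_lt_of_le zero_lt_one hp1).ne'
  rw [Lp.norm_toLp, eLpNorm_indicator_const (measurableSet_singleton _) hp0 hp',
    measure_singleton hpt hc hμ]
  simp [← ENNReal.toReal_rpow, ENNReal.toReal_ofReal (hc n).le]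

lemma rep_at_pt {φ : Lp ℝ p μ →L[ℝ] Lp ℝ ∞ μ} {lam : ℕ → ℝ}
    (hrep : RepresentedBy μ p pt φ lam) (f : Lp ℝ p μ) (m : ℕ) :
    ((φ f : Lp ℝ ∞ μ) : X → ℝ) (pt m) = (f : X → ℝ) (pt m) * lam m := by
  have h := eq_at_pt hpt hc hμ (hrep f) m
  exact h.trans (Gf_pt hpt lam _ m)

lemma rep_ub (hp' : p ≠ ∞) {φ : Lp ℝ p μ →L[ℝ] Lp ℝ ∞ μ} {lam : ℕ → ℝ}
    (hrep : RepresentedBy μ p pt φ lam) (n : ℕ) :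
    |lam n| * c n ^ (-(1 / p.toReal)) ≤ ‖φ‖ := by
  refine le_lam_bound hpt hc hμ p (fun m => ?_) n
  set χ : Lp ℝ p μ := (chi_memℒp hpt hc hμ p m).toLp _ with hχ
  have h1 : ((φ χ : Lp ℝ ∞ μ) : X → ℝ) (pt m) = lam m := by
    rw [rep_at_pt hpt hc hμ p hrep χ m, hχ, chi_coe_pt hpt hc hμ p,
      Set.indicator_of_mem (Set.mem_singleton _), one_mul]
  calc |lam m| = |((φ χ : Lp ℝ ∞ μ) : X → ℝ) (pt m)| := by rw [h1]
    _ ≤ ‖φ χ‖ := linf_point_le hpt hc hμ (φ χ) m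
    _ ≤ ‖φ‖ * ‖χ‖ := φ.le_opNorm χ
    _ = ‖φ‖ * c m ^ (1 / p.toReal) := by rw [hχ, chi_norm hpt hc hμ p hp']

lemma rep_opNorm_le (hp' : p ≠ ∞) {φ : Lp ℝ p μ →L[ℝ] Lp ℝ ∞ μ} {lam : ℕ → ℝ}
    (hrep : RepresentedBy μ p pt φ lam) {C : ℝ}
    (hub : ∀ n, |lam n| * c n ^ (-(1 / p.toReal)) ≤ C) : ‖φ‖ ≤ C := by
  have hC0 : 0 ≤ C := C_nonneg hpt hc hμ p hub
  refine φ.opNorm_le_bound hC0 fun f => ?_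
  refine linf_norm_le hpt hc hμ (φ f) (mul_nonneg hC0 (norm_nonneg f)) fun m => ?_
  rw [rep_at_pt hpt hc hμ p hrep f m]
  have h := Gf_bound hpt hc hμ p hp' hub f (pt m)
  rwa [Gf_pt hpt] at h

lemma rep_isLUB (hp' : p ≠ ∞) {φ : Lp ℝ p μ →L[ℝ] Lp ℝ ∞ μ} {lam : ℕ → ℝ}
    (hrep : RepresentedBy μ p pt φ lam) :
    IsLUB (Set.range fun n => |lam n| * c n ^ (-(1 / p.toReal))) ‖φ‖ := by
  constructor
  · rintro y ⟨n, rfl⟩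
    exact rep_ub hpt hc hμ p hp' hrep n
  · intro C hC
    exact rep_opNorm_le hpt hc hμ p hp' hrep fun n => hC ⟨n, rfl⟩

lemma rep_unique {φ : Lp ℝ p μ →L[ℝ] Lp ℝ ∞ μ} {lam lam' : ℕ → ℝ}
    (h : RepresentedBy μ p pt φ lam) (h' : RepresentedBy μ p pt φ lam') : lam = lam' := by
  funext n
  have e1 := rep_at_pt hpt hc hμ p h ((chi_memℒp hpt hc hμ p n).toLp _) n
  have e2 := rep_at_pt hpt hc hμ p h' ((chi_memℒp hpt hc hμ p n).toLp _) n
  rw [chi_coe_pt hpt hc hμ p, Set.indicator_of_mem (Set.mem_singleton _), one_mul] at e1 e2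
  rw [← e1, e2]

lemma Gf_add (hp' : p ≠ ∞) (lam : ℕ → ℝ) (f g : Lp ℝ p μ) :
    Gf pt lam ((f + g : Lp ℝ p μ) : X → ℝ) =
      Gf pt lam (f : X → ℝ) + Gf pt lam (g : X → ℝ) := by
  funext x
  rcases em (x ∈ Set.range pt) with ⟨m, rfl⟩ | hx
  · rw [Pi.add_apply, Gf_pt hpt, Gf_pt hpt, Gf_pt hpt,
      eq_at_pt hpt hc hμ (Lp.coeFn_add f g) m, Pi.add_apply]
    ring
  · rw [Pi.add_apply, Gf_off pt lam _ hx, Gf_off pt lam _ hx, Gf_off pt lam _ hx, add_zero]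

lemma Gf_smul (hp' : p ≠ ∞) (lam : ℕ → ℝ) (a : ℝ) (f : Lp ℝ p μ) :
    Gf pt lam ((a • f : Lp ℝ p μ) : X → ℝ) = a • Gf pt lam (f : X → ℝ) := by
  funext x
  rcases em (x ∈ Set.range pt) with ⟨m, rfl⟩ | hx
  · rw [Pi.smul_apply, Gf_pt hpt, Gf_pt hpt,
      eq_at_pt hpt hc hμ (Lp.coeFn_smul a f) m, Pi.smul_apply, smul_eq_mul, smul_eq_mul]
    ring
  · rw [Pi.smul_apply, Gf_off pt lam _ hx, Gf_off pt lam _ hx, smul_zero]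

/-- The continuous linear map associated to a bounded sequence `lam`. -/
noncomputable def mkPhi (hp' : p ≠ ∞) (lam : ℕ → ℝ) (C : ℝ)
    (hub : ∀ n, |lam n| * c n ^ (-(1 / p.toReal)) ≤ C) : Lp ℝ p μ →L[ℝ] Lp ℝ ∞ μ :=
  LinearMap.mkContinuous
    { toFun := fun f => (Gf_memLinf hpt hc hμ p hp' hub f).toLp _
      map_add' := fun f g => by
        rw [← MemLp.toLp_add (Gf_memLinf hpt hc hμ p hp' hub f)
          (Gf_memLinf hpt hc hμ p hp' hub g)]
        exact MemLp.toLp_congr _ _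
          (Filter.EventuallyEq.of_eq (Gf_add hpt hc hμ p hp' lam f g))
      map_smul' := fun a f => by
        simp only [RingHom.id_apply]
        rw [← MemLp.toLp_const_smul a (Gf_memLinf hpt hc hμ p hp' hub f)]
        exact MemLp.toLp_congr _ _
          (Filter.EventuallyEq.of_eq (Gf_smul hpt hc hμ p hp' lam a f)) }
    C (fun f => by
      show ‖MemLp.toLp (Gf pt lam ((f : Lp ℝ p μ) : X → ℝ))
        (Gf_memLinf hpt hc hμ p hp' hub f)‖ ≤ C * ‖f‖
      have hC0 : 0 ≤ C := C_nonneg hpt hc hμ p hub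
      refine linf_norm_le hpt hc hμ _ (mul_nonneg hC0 (norm_nonneg f)) fun m => ?_
      rw [eq_at_pt hpt hc hμ (MemLp.coeFn_toLp (Gf_memLinf hpt hc hμ p hp' hub f)) m]
      exact Gf_bound hpt hc hμ p hp' hub f (pt m))

lemma mkPhi_coe (hp' : p ≠ ∞) (lam : ℕ → ℝ) (C : ℝ)
    (hub : ∀ n, |lam n| * c n ^ (-(1 / p.toReal)) ≤ C) (f : Lp ℝ p μ) :
    ((mkPhi hpt hc hμ p hp' lam C hub f : Lp ℝ ∞ μ) : X → ℝ) =ᵐ[μ]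
      Gf pt lam (f : X → ℝ) :=
  MemLp.coeFn_toLp (Gf_memLinf hpt hc hμ p hp' hub f)

lemma mkPhi_rep (hp' : p ≠ ∞) (lam : ℕ → ℝ) (C : ℝ)
    (hub : ∀ n, |lam n| * c n ^ (-(1 / p.toReal)) ≤ C) :
    RepresentedBy μ p pt (mkPhi hpt hc hμ p hp' lam C hub) lam :=
  fun f => mkPhi_coe hpt hc hμ p hp' lam C hub f

lemma mkPhi_hom (hp' : p ≠ ∞) (lam : ℕ → ℝ) (C : ℝ)
    (hub : ∀ n, |lam n| * c n ^ (-(1 / p.toReal)) ≤ C) :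
    IsLinftyModuleHom μ p (mkPhi hpt hc hμ p hp' lam C hub) := by
  intro lam0 hlam0 f g hg
  have hgv : ∀ n, (g : X → ℝ) (pt n) = lam0 (pt n) * (f : X → ℝ) (pt n) :=
    fun n => eq_at_pt hpt hc hμ hg n
  have hGf : Gf pt lam (g : X → ℝ) = fun x => lam0 x * Gf pt lam (f : X → ℝ) x := by
    funext x
    rcases em (x ∈ Set.range pt) with ⟨m, rfl⟩ | hx
    · rw [Gf_pt hpt, Gf_pt hpt, hgv m]; ring
    · rw [Gf_off pt lam _ hx, Gf_off pt lam _ hx, mul_zero]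
  refine (mkPhi_coe hpt hc hμ p hp' lam C hub g).trans ?_
  rw [hGf]
  filter_upwards [mkPhi_coe hpt hc hμ p hp' lam C hub f] with x hx
  rw [hx]

lemma exists_rep (hp' : p ≠ ∞) (φ : Lp ℝ p μ →L[ℝ] Lp ℝ ∞ μ)
    (hhom : IsLinftyModuleHom μ p φ) :
    RepresentedBy μ p pt φ
      (fun n => ((φ ((chi_memℒp hpt hc hμ p n).toLp _) : Lp ℝ ∞ μ) : X → ℝ) (pt n)) := by
  intro f
  set lam : ℕ → ℝ :=
    fun n => ((φ ((chi_memℒp hpt hc hμ p n).toLp _) : Lp ℝ ∞ μ) : X → ℝ) (pt n) with hlam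
  show ((φ f : Lp ℝ ∞ μ) : X → ℝ) =ᵐ[μ] Gf pt lam (f : X → ℝ)
  refine (ae_iff_forall hpt hc hμ
    (P := fun x => ((φ f : Lp ℝ ∞ μ) : X → ℝ) x = Gf pt lam (f : X → ℝ) x)).2 fun m => ?_
  set χ : Lp ℝ p μ := (chi_memℒp hpt hc hμ p m).toLp _ with hχ
  set g : Lp ℝ p μ := ((f : X → ℝ) (pt m)) • χ with hgdef
  have hlam0 : MemLp (Set.indicator {pt m} fun _ => (1 : ℝ)) ∞ μ :=
    memLp_top_of_bound
      ((measurable_const.indicator (measurableSet_singleton (pt m))).aestronglyMeasurable) 1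
      (Filter.Eventually.of_forall fun x => by
        by_cases hx : x ∈ ({pt m} : Set X) <;>
          simp [Set.indicator_of_mem, Set.indicator_of_notMem, hx])
  have hgae : (g : X → ℝ) =ᵐ[μ]
      fun x => Set.indicator {pt m} (fun _ => (1 : ℝ)) x * (f : X → ℝ) x := by
    refine (ae_iff_forall hpt hc hμ (P := fun x => (g : X → ℝ) x =
      Set.indicator {pt m} (fun _ => (1 : ℝ)) x * (f : X → ℝ) x)).2 fun k => ?_
    have h1 : (g : X → ℝ) (pt k) = (f : X → ℝ) (pt m) * (χ : X → ℝ) (pt k) := by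
      have := eq_at_pt hpt hc hμ (Lp.coeFn_smul ((f : X → ℝ) (pt m)) χ) k
      simpa [smul_eq_mul] using this
    rw [h1, hχ, chi_coe_pt hpt hc hμ p]
    by_cases hk : k = m
    · subst hk; rw [Set.indicator_of_mem (Set.mem_singleton _)]; ring
    · have hnm : pt k ∉ ({pt m} : Set X) :=
        fun h => hk (hpt (Set.mem_singleton_iff.1 h))
      rw [Set.indicator_of_notMem hnm]; ring
  have hconc := hhom _ hlam0 f g hgae
  have h2 := eq_at_pt hpt hc hμ hconc m
  rw [Set.indicator_of_mem (Set.mem_singleton _), one_mul] at h2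
  have h3 : ((φ g : Lp ℝ ∞ μ) : X → ℝ) =ᵐ[μ]
      fun x => (f : X → ℝ) (pt m) * ((φ χ : Lp ℝ ∞ μ) : X → ℝ) x := by
    have hsm : φ g = ((f : X → ℝ) (pt m)) • (φ χ) := by rw [hgdef]; exact _root_.map_smul φ _ _
    rw [hsm]
    filter_upwards [Lp.coeFn_smul ((f : X → ℝ) (pt m)) (φ χ)] with x hx
    simpa [smul_eq_mul] using hx
  have h4 := eq_at_pt hpt hc hμ h3 m
  rw [Gf_pt hpt, ← h2, h4]

end Main

end Stmt7Aux

/-- For a countable sum of Dirac masses `μ = ∑ cₙ δ_{pₙ}` with `cₙ > 0` and `1 ≤ p < ∞`,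
every bounded `L^∞(μ)`-module homomorphism `φ : L^p(μ) → L^∞(μ)` is represented by a unique
sequence `(λₙ)` with `supₙ |λₙ| cₙ^{-1/p} < ∞`, the operator norm of `φ` being exactly this
supremum; conversely, every such sequence defines a bounded module homomorphism. -/
theorem stmt7 {X : Type*} [MeasurableSpace X] [MeasurableSingletonClass X]
    (pt : ℕ → X) (hpt : Function.Injective pt)
    (c : ℕ → ℝ) (hc : ∀ n, 0 < c n)
    (μ : Measure X)
    (hμ : μ = Measure.sum fun n => ENNReal.ofReal (c n) • Measure.dirac (pt n))
    (p : ℝ≥0∞) [Fact (1 ≤ p)] (hp' : p ≠ ∞) :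
    (∀ φ : Lp ℝ p μ →L[ℝ] Lp ℝ ∞ μ, IsLinftyModuleHom μ p φ →
      ∃! lam : ℕ → ℝ,
        (∃ C : ℝ, ∀ n, |lam n| * c n ^ (-(1 / p.toReal)) ≤ C) ∧
        RepresentedBy μ p pt φ lam ∧
        IsLUB (Set.range fun n => |lam n| * c n ^ (-(1 / p.toReal))) ‖φ‖) ∧
    (∀ lam : ℕ → ℝ, (∃ C : ℝ, ∀ n, |lam n| * c n ^ (-(1 / p.toReal)) ≤ C) →
      ∃ φ : Lp ℝ p μ →L[ℝ] Lp ℝ ∞ μ, IsLinftyModuleHom μ p φ ∧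
        RepresentedBy μ p pt φ lam ∧
        IsLUB (Set.range fun n => |lam n| * c n ^ (-(1 / p.toReal))) ‖φ‖) := by
  constructor
  · intro φ hhom
    have hrep := Stmt7Aux.exists_rep hpt hc hμ p hp' φ hhom
    refine ⟨_, ⟨⟨‖φ‖, fun n => Stmt7Aux.rep_ub hpt hc hμ p hp' hrep n⟩, hrep,
      Stmt7Aux.rep_isLUB hpt hc hμ p hp' hrep⟩, ?_⟩
    rintro lam' ⟨-, hrep', -⟩
    exact Stmt7Aux.rep_unique hpt hc hμ p hrep' hrep
  · rintro lam ⟨C, hub⟩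
    exact ⟨Stmt7Aux.mkPhi hpt hc hμ p hp' lam C hub,
      Stmt7Aux.mkPhi_hom hpt hc hμ p hp' lam C hub,
      Stmt7Aux.mkPhi_rep hpt hc hμ p hp' lam C hub,
      Stmt7Aux.rep_isLUB hpt hc hμ p hp'
        (Stmt7Aux.mkPhi_rep hpt hc hμ p hp' lam C hub)⟩
end

section
/- Let $(X,d)$ be a metric space, $K \subseteq \mathbb{R}$ compact, and $\gamma : K \to X$ a Lipschitz map. If $K_0 \subseteq K$ is a measurable set on which the metric differential of $\gamma$ exists and equals $0$ at every point (i.e. $\lim_{K \ni t' \to t} d(\gamma(t'),\gamma(t))/|t'-t| = 0$ for all $t \in K_0$), then the $1$-dimensional Hausdorff measure of the image satisfies $\mathcal{H}^1(\gamma(K_0)) = 0$. -/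
open MeasureTheory Filter
open scoped Topology NNReal
open scoped ENNReal

/-- If `γ : ℝ → X` is Lipschitz on a compact set `K ⊆ ℝ` and its metric differential exists
and vanishes at every point of a measurable subset `K₀ ⊆ K`, then the image `γ(K₀)` is
`ℋ¹`-null. -/
theorem stmt17 {X : Type*} [MetricSpace X] [MeasurableSpace X] [BorelSpace X]
    (K : Set ℝ) (hKc : IsCompact K) (L : ℝ≥0) (γ : ℝ → X)
    (hγ : LipschitzOnWith L γ K)
    (K₀ : Set ℝ) (hK₀ : K₀ ⊆ K) (hK₀m : MeasurableSet K₀)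
    (hmd : ∀ t ∈ K₀,
      Tendsto (fun t' => dist (γ t') (γ t) / |t' - t|) (𝓝[K \ {t}] t) (𝓝 0)) :
    Measure.hausdorffMeasure (X := X) 1 (γ '' K₀) = 0 := by
  have hKvol : volume K ≠ ⊤ := hKc.measure_lt_top.ne
  -- Step 1: for every positive `ε`, bound the measure by `ε * volume K`.
  have key : ∀ ε : ℝ≥0, 0 < ε → μH[1] (γ '' K₀) ≤ (ε : ℝ≥0∞) * volume K := by
    intro ε hε
    set a : ℕ → ℝ := fun n => ((n : ℝ) + 1)⁻¹ with ha
    have hapos : ∀ n, 0 < a n := fun n => by positivity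
    set E : ℕ → Set ℝ := fun n =>
      {t ∈ K₀ | ∀ t' ∈ K, |t' - t| ≤ a n → dist (γ t') (γ t) ≤ (ε : ℝ) * |t' - t|} with hE
    have hEmono : Monotone E := by
      intro m n hmn t ht
      refine ⟨ht.1, fun t' ht' h => ht.2 t' ht' (h.trans ?_)⟩
      simp only [ha]
      apply inv_anti₀ (by positivity)
      have : (m : ℝ) ≤ n := by exact_mod_cast hmn
      linarith
    have hEsub : ∀ n, E n ⊆ K₀ := fun n t ht => ht.1
    have hEunion : K₀ = ⋃ n, E n := by
      apply Set.Subset.antisymm _ (Set.iUnion_subset hEsub)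
      intro t ht
      have h := hmd t ht
      rw [Metric.tendsto_nhdsWithin_nhds] at h
      obtain ⟨δ, hδ, hδ'⟩ := h (ε : ℝ) (by exact_mod_cast hε)
      obtain ⟨n, hn⟩ := exists_nat_one_div_lt hδ
      refine Set.mem_iUnion.2 ⟨n, ht, fun t' ht' hlt => ?_⟩
      rcases eq_or_ne t' t with rfl | hne
      · simp
      · have h1 : t' ∈ K \ {t} := ⟨ht', hne⟩
        have h2 : dist t' t < δ := by
          rw [Real.dist_eq]
          calc |t' - t| ≤ a n := hlt
            _ = 1 / ((n : ℝ) + 1) := by rw [ha, one_div]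
            _ < δ := hn
        have h3 := hδ' h1 h2
        rw [Real.dist_eq, sub_zero] at h3
        have habs : 0 < |t' - t| := abs_pos.2 (sub_ne_zero.2 hne)
        have h4 : dist (γ t') (γ t) / |t' - t| < ε := by
          rwa [abs_of_nonneg (div_nonneg dist_nonneg habs.le)] at h3
        have := (div_lt_iff₀ habs).1 h4
        linarith
    -- Step 2: bound `μH[1] (γ '' E n)` for each `n`.
    have hEn : ∀ n, μH[1] (γ '' E n) ≤ (ε : ℝ≥0∞) * volume K := by
      intro n
      set S : ℤ → Set ℝ := fun k => E n ∩ Set.Ico ((k : ℝ) * a n) (((k : ℝ) + 1) * a n) with hS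
      have hcover : γ '' E n ⊆ ⋃ k : ℤ, γ '' S k := by
        rintro _ ⟨t, ht, rfl⟩
        refine Set.mem_iUnion.2 ⟨⌊t / a n⌋, Set.mem_image_of_mem _ ⟨ht, ?_, ?_⟩⟩
        · rw [← le_div_iff₀ (hapos n)]
          exact Int.floor_le _
        · rw [← div_lt_iff₀ (hapos n)]
          exact_mod_cast Int.lt_floor_add_one (t / a n)
      have hlip : ∀ k, LipschitzOnWith ε γ (S k) := by
        intro k
        apply LipschitzOnWith.of_dist_le_mul
        intro x hx y hy
        have hxy : |x - y| ≤ a n := by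
          rw [abs_sub_le_iff]
          constructor <;> nlinarith [hx.2.1, hx.2.2, hy.2.1, hy.2.2, hapos n]
        have := hy.1.2 x (hK₀ (hx.1.1)) hxy
        rwa [Real.dist_eq]
      have hSsub : ∀ k, S k ⊆ toMeasurable volume (E n) ∩
          Set.Ico ((k : ℝ) * a n) (((k : ℝ) + 1) * a n) :=
        fun k => Set.inter_subset_inter_left _ (subset_toMeasurable _ _)
      have hdisj : Pairwise (Function.onFun Disjoint fun k : ℤ =>
          toMeasurable volume (E n) ∩ Set.Ico ((k : ℝ) * a n) (((k : ℝ) + 1) * a n)) := by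
        intro k l hkl
        apply Set.disjoint_of_subset Set.inter_subset_right Set.inter_subset_right
        rw [Set.Ico_disjoint_Ico]
        rcases lt_or_gt_of_ne hkl with h | h
        · have : (k : ℝ) + 1 ≤ l := by exact_mod_cast h
          refine le_trans (min_le_left _ _) (le_trans ?_ (le_max_right _ _))
          nlinarith [hapos n]
        · have : (l : ℝ) + 1 ≤ k := by exact_mod_cast h
          refine le_trans (min_le_right _ _) (le_trans ?_ (le_max_left _ _))
          nlinarith [hapos n]
      have hmeas : ∀ k : ℤ, MeasurableSet (toMeasurable volume (E n) ∩
          Set.Ico ((k : ℝ) * a n) (((k : ℝ) + 1) * a n)) :=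
        fun k => (measurableSet_toMeasurable _ _).inter measurableSet_Ico
      calc μH[1] (γ '' E n) ≤ ∑' k : ℤ, μH[1] (γ '' S k) :=
            (measure_mono hcover).trans (measure_iUnion_le _)
        _ ≤ ∑' k : ℤ, (ε : ℝ≥0∞) * μH[1] (S k) := by
            refine ENNReal.tsum_le_tsum fun k => ?_
            simpa [ENNReal.rpow_one] using (hlip k).hausdorffMeasure_image_le zero_le_one
        _ = (ε : ℝ≥0∞) * ∑' k : ℤ, volume (S k) := by
            rw [ENNReal.tsum_mul_left, hausdorffMeasure_real]
        _ ≤ (ε : ℝ≥0∞) * volume K := by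
            apply mul_le_mul_right _ _
            calc ∑' k : ℤ, volume (S k)
                ≤ ∑' k : ℤ, volume (toMeasurable volume (E n) ∩
                    Set.Ico ((k : ℝ) * a n) (((k : ℝ) + 1) * a n)) :=
                  ENNReal.tsum_le_tsum fun k => measure_mono (hSsub k)
              _ = volume (⋃ k : ℤ, toMeasurable volume (E n) ∩
                    Set.Ico ((k : ℝ) * a n) (((k : ℝ) + 1) * a n)) :=
                  (measure_iUnion hdisj hmeas).symm
              _ ≤ volume (toMeasurable volume (E n)) :=
                  measure_mono (Set.iUnion_subset fun k => Set.inter_subset_left)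
              _ = volume (E n) := measure_toMeasurable _
              _ ≤ volume K := measure_mono ((hEsub n).trans hK₀)
    -- Step 3: pass to the increasing union.
    have hdir : Directed (· ⊆ ·) fun n => γ '' E n := fun m n =>
      ⟨max m n, Set.image_mono (hEmono (le_max_left _ _)),
        Set.image_mono (hEmono (le_max_right _ _))⟩
    rw [hEunion, Set.image_iUnion, Directed.measure_iUnion hdir]
    exact iSup_le hEn
  -- Step 4: conclude.
  by_contra hne
  obtain ⟨δ, hδ, hδ'⟩ := ENNReal.exists_nnreal_pos_mul_lt hKvol hne
  exact absurd (key δ hδ) (not_le.2 hδ')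
end

section
/- Let $\mu$ be a finite measure, and let $M$ and $N$ be Banach spaces that are $L^\infty(\mu)$-modules, with $N$ an $L^\infty(\mu)$-normed module (i.e. $\|n\|_N = \max(\|\chi_U n\|_N, \|\chi_{U^c} n\|_N)$ for every measurable $U$ and $n \in N$). Then the Banach space $\mathrm{Alt}^k(M,N)$ of bounded alternating $L^\infty(\mu)$-multilinear maps $M^k \to N$, with the action $(\lambda\varphi)(m_1,\dots,m_k) = \varphi(\lambda m_1, m_2,\dots,m_k)$, satisfies $\|\varphi\|_{\mathrm{Alt}^k(M,N)} = \max\big(\|\chi_U \varphi\|_{\mathrm{Alt}^k(M,N)}, \|\chi_{U^c}\varphi\|_{\mathrm{Alt}^k(M,N)}\big)$ for every measurable set $U$. -/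
open MeasureTheory
open scoped ENNReal

/-- The `Alt^k` norm of a map `φ : M^k → N`: the supremum of `‖φ(m₁,…,m_k)‖` over the
product of unit balls. -/
noncomputable def altNorm {M N : Type*} [NormedAddCommGroup M] [NormedAddCommGroup N]
    {k : ℕ} (φ : (Fin k → M) → N) : ℝ :=
  sSup {r : ℝ | ∃ m : Fin k → M, (∀ i, ‖m i‖ ≤ 1) ∧ r = ‖φ m‖}

/-- If `M` and `N` are Banach `L^∞(μ)`-modules (the actions being encoded by maps
`sM`, `sN` indexed by essentially bounded functions) and `N` is `L^∞(μ)`-normed, then the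
space of bounded alternating `L^∞(μ)`-multilinear maps `M^k → N` is `L^∞(μ)`-normed:
for every measurable `U`,
`‖φ‖ = max (‖χ_U φ‖, ‖χ_{Uᶜ} φ‖)` where `(χ_U φ)(m₁,…,m_k) = φ(χ_U m₁, m₂, …, m_k)`. -/
theorem stmt19 {X : Type*} [MeasurableSpace X] (μ : Measure X) [IsFiniteMeasure μ]
    (k : ℕ) (hk : 0 < k)
    {M N : Type*} [NormedAddCommGroup M] [NormedSpace ℝ M] [CompleteSpace M]
    [NormedAddCommGroup N] [NormedSpace ℝ N] [CompleteSpace N]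
    -- the `L^∞(μ)`-module structure on `M`:
    (sM : (X → ℝ) → M → M)
    (hsM_ae : ∀ lam lam' : X → ℝ, lam =ᵐ[μ] lam' → sM lam = sM lam')
    (hsM_add : ∀ lam : X → ℝ, ∀ m m', sM lam (m + m') = sM lam m + sM lam m')
    (hsM_mul : ∀ lam lam' : X → ℝ, ∀ m, sM (lam * lam') m = sM lam (sM lam' m))
    (hsM_one : ∀ m, sM (fun _ => (1 : ℝ)) m = m)
    (hsM_bdd : ∀ lam : X → ℝ, MemLp lam ∞ μ →
      ∀ m, ‖sM lam m‖ ≤ (eLpNorm lam ∞ μ).toReal * ‖m‖)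
    -- the `L^∞(μ)`-module structure on `N`:
    (sN : (X → ℝ) → N → N)
    (hsN_ae : ∀ lam lam' : X → ℝ, lam =ᵐ[μ] lam' → sN lam = sN lam')
    (hsN_add : ∀ lam : X → ℝ, ∀ n n', sN lam (n + n') = sN lam n + sN lam n')
    (hsN_mul : ∀ lam lam' : X → ℝ, ∀ n, sN (lam * lam') n = sN lam (sN lam' n))
    (hsN_one : ∀ n, sN (fun _ => (1 : ℝ)) n = n)
    (hsN_bdd : ∀ lam : X → ℝ, MemLp lam ∞ μ →
      ∀ n, ‖sN lam n‖ ≤ (eLpNorm lam ∞ μ).toReal * ‖n‖)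
    -- `N` is an `L^∞(μ)`-normed module:
    (hNnorm : ∀ U : Set X, MeasurableSet U → ∀ n : N,
      ‖n‖ = max ‖sN (U.indicator fun _ => (1 : ℝ)) n‖
              ‖sN (Uᶜ.indicator fun _ => (1 : ℝ)) n‖)
    -- `φ` is a bounded alternating `L^∞(μ)`-multilinear map `M^k → N`:
    (φ : (Fin k → M) → N)
    (hadd : ∀ (m : Fin k → M) (i : Fin k) (g h : M),
      φ (Function.update m i (g + h)) =
        φ (Function.update m i g) + φ (Function.update m i h))
    (hsmul : ∀ (m : Fin k → M) (i : Fin k) (lam : X → ℝ), MemLp lam ∞ μ →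
      φ (Function.update m i (sM lam (m i))) = sN lam (φ m))
    (halt : ∀ (m : Fin k → M) (i j : Fin k), i ≠ j → m i = m j → φ m = 0)
    (hbdd : ∃ C : ℝ, ∀ m : Fin k → M, ‖φ m‖ ≤ C * ∏ i, ‖m i‖)
    (U : Set X) (hU : MeasurableSet U) :
    altNorm φ =
      max (altNorm fun m => φ (Function.update m ⟨0, hk⟩
            (sM (U.indicator fun _ => (1 : ℝ)) (m ⟨0, hk⟩))))
          (altNorm fun m => φ (Function.update m ⟨0, hk⟩
            (sM (Uᶜ.indicator fun _ => (1 : ℝ)) (m ⟨0, hk⟩)))) := by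

  classical
  set i0 : Fin k := ⟨0, hk⟩
  set chi : X → ℝ := U.indicator fun _ => (1 : ℝ) with hchi
  set chi' : X → ℝ := Uᶜ.indicator fun _ => (1 : ℝ) with hchi'
  have hmem : ∀ V : Set X, MeasurableSet V → MemLp (V.indicator fun _ => (1 : ℝ)) ∞ μ := by
    intro V hV
    exact memLp_top_of_bound ((measurable_const.indicator hV).aestronglyMeasurable) 1
      (Filter.Eventually.of_forall fun x => by
        by_cases hx : x ∈ V <;> simp [Set.indicator, hx])
  have hkey : ∀ m : Fin k → M,
      φ (Function.update m i0 (sM chi (m i0))) = sN chi (φ m) :=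
    fun m => hsmul m i0 chi (hmem U hU)
  have hkey' : ∀ m : Fin k → M,
      φ (Function.update m i0 (sM chi' (m i0))) = sN chi' (φ m) :=
    fun m => hsmul m i0 chi' (hmem Uᶜ hU.compl)
  obtain ⟨C, hC⟩ := hbdd
  set D : ℝ := max C 0 with hD
  have hDnn : 0 ≤ D := le_max_right _ _
  have hφD : ∀ m : Fin k → M, (∀ i, ‖m i‖ ≤ 1) → ‖φ m‖ ≤ D := by
    intro m hm
    have hp : ∏ i, ‖m i‖ ≤ 1 :=
      Finset.prod_le_one (fun i _ => norm_nonneg _) (fun i _ => hm i)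
    have hp0 : 0 ≤ ∏ i, ‖m i‖ := Finset.prod_nonneg fun i _ => norm_nonneg _
    calc ‖φ m‖ ≤ C * ∏ i, ‖m i‖ := hC m
      _ ≤ D * ∏ i, ‖m i‖ := mul_le_mul_of_nonneg_right (le_max_left _ _) hp0
      _ ≤ D * 1 := mul_le_mul_of_nonneg_left hp hDnn
      _ = D := mul_one D
  have hmax : ∀ m : Fin k → M, ‖φ m‖ = max ‖sN chi (φ m)‖ ‖sN chi' (φ m)‖ :=
    fun m => hNnorm U hU (φ m)
  -- the three sets
  set S : Set ℝ := {r | ∃ m : Fin k → M, (∀ i, ‖m i‖ ≤ 1) ∧ r = ‖φ m‖} with hS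
  set A : Set ℝ := {r | ∃ m : Fin k → M, (∀ i, ‖m i‖ ≤ 1) ∧ r = ‖sN chi (φ m)‖} with hA
  set B : Set ℝ := {r | ∃ m : Fin k → M, (∀ i, ‖m i‖ ≤ 1) ∧ r = ‖sN chi' (φ m)‖} with hB
  have haleφ : ∀ m : Fin k → M, ‖sN chi (φ m)‖ ≤ ‖φ m‖ :=
    fun m => (hmax m) ▸ le_max_left _ _
  have hbleφ : ∀ m : Fin k → M, ‖sN chi' (φ m)‖ ≤ ‖φ m‖ :=
    fun m => (hmax m) ▸ le_max_right _ _
  have hSne : S.Nonempty := ⟨‖φ (fun _ => 0)‖, fun _ => 0, fun i => by simp, rfl⟩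
  have hAne : A.Nonempty := ⟨_, fun _ => 0, fun i => by simp, rfl⟩
  have hBne : B.Nonempty := ⟨_, fun _ => 0, fun i => by simp, rfl⟩
  have hSbdd : BddAbove S := ⟨D, by rintro r ⟨m, hm, rfl⟩; exact hφD m hm⟩
  have hAbdd : BddAbove A := ⟨D, by rintro r ⟨m, hm, rfl⟩; exact (haleφ m).trans (hφD m hm)⟩
  have hBbdd : BddAbove B := ⟨D, by rintro r ⟨m, hm, rfl⟩; exact (hbleφ m).trans (hφD m hm)⟩
  have hAeq : altNorm (fun m => φ (Function.update m i0 (sM chi (m i0)))) = sSup A := by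
    unfold altNorm; congr 1; ext r
    constructor
    · rintro ⟨m, hm, rfl⟩; exact ⟨m, hm, by simp only [hkey m]⟩
    · rintro ⟨m, hm, rfl⟩; exact ⟨m, hm, by simp only [hkey m]⟩
  have hBeq : altNorm (fun m => φ (Function.update m i0 (sM chi' (m i0)))) = sSup B := by
    unfold altNorm; congr 1; ext r
    constructor
    · rintro ⟨m, hm, rfl⟩; exact ⟨m, hm, by simp only [hkey' m]⟩
    · rintro ⟨m, hm, rfl⟩; exact ⟨m, hm, by simp only [hkey' m]⟩
  show altNorm φ = max (altNorm fun m => φ (Function.update m i0 (sM chi (m i0))))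
      (altNorm fun m => φ (Function.update m i0 (sM chi' (m i0))))
  rw [hAeq, hBeq]
  show sSup S = max (sSup A) (sSup B)
  apply le_antisymm
  · apply csSup_le hSne
    rintro r ⟨m, hm, rfl⟩
    rw [hmax m]
    exact max_le_max (le_csSup hAbdd ⟨m, hm, rfl⟩) (le_csSup hBbdd ⟨m, hm, rfl⟩)
  · apply max_le
    · apply csSup_le hAne
      rintro r ⟨m, hm, rfl⟩
      exact (haleφ m).trans (le_csSup hSbdd ⟨m, hm, rfl⟩)
    · apply csSup_le hBne
      rintro r ⟨m, hm, rfl⟩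
      exact (hbleφ m).trans (le_csSup hSbdd ⟨m, hm, rfl⟩)
end
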